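/- arXiv:2506.18033 — 2 statements merged into one kernel-verified Lean document; each statement's English description precedes it below -/
import Mathlib

section
/- Let M = (m_i^a) be an r×N integer matrix satisfying Σ_{i=1}^N m_i^a > 0 for all a = 1,…,r. Then for every s ∈ ℂ^r and every z ∈ ℂ, the multiple series Σ_{d ∈ ℕ^r} z^{Σ_a Σ_i m_i^a d_a} / ∏_{i=1}^N Γ(1 + Σ_a m_i^a (d_a + s_a)) converges absolutely (terms where the Gamma argument is a nonpositive integer being set to zero). -/
open Finset

/-- `k! ≤ (k-j)! * k^j` for `j ≤ k`. -/
lemma aux_fact_le_sub_mul_pow : ∀ (j k : ℕ), j ≤ k → k.factorial ≤ (k - j).factorial * k ^ j := by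
  intro j
  induction j with
  | zero => intro k _; simp
  | succ j ih =>
    intro k hk
    have hj : j ≤ k := Nat.le_of_succ_le hk
    obtain ⟨m, hm⟩ : ∃ m, k - j = m + 1 := ⟨k - (j+1), by omega⟩
    calc k.factorial ≤ (k - j).factorial * k ^ j := ih k hj
    _ = (m + 1) * (m.factorial * k ^ j) := by rw [hm, Nat.factorial_succ]; ring
    _ ≤ k * (m.factorial * k ^ j) := by
        have : m + 1 ≤ k := by omega
        exact Nat.mul_le_mul_right _ this
    _ = (k - (j+1)).factorial * k ^ (j+1) := by
        have : k - (j+1) = m := by omega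
        rw [this, pow_succ]; ring

/-- multinomial-type bound: `(∑ f)! ≤ card^(∑ f) * ∏ (f i)!`. -/
lemma aux_factorial_sum_le {ι : Type*} [DecidableEq ι] (s : Finset ι) (f : ι → ℕ) :
    (∑ i ∈ s, f i).factorial ≤ s.card ^ (∑ i ∈ s, f i) * ∏ i ∈ s, (f i).factorial := by
  induction s using Finset.induction_on with
  | empty => simp
  | insert _ _ ha ih =>
    rename_i a s
    rw [Finset.sum_insert ha, Finset.prod_insert ha, Finset.card_insert_of_notMem ha]
    set t := ∑ i ∈ s, f i
    set c := s.card
    have h1 : (f a + t).factorial = (f a + t).choose t * (f a).factorial * t.factorial := by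
      have h := Nat.choose_mul_factorial_mul_factorial (Nat.le_add_left t (f a)) (n := f a + t)
      rw [Nat.add_sub_cancel] at h
      rw [← h]; ring
    have h3 : (f a + t).choose t * c ^ t ≤ (c + 1) ^ (f a + t) := by
      have hb := add_pow c 1 (f a + t)
      simp only [Nat.cast_id, one_pow, mul_one] at hb
      rw [hb]
      calc (f a + t).choose t * c ^ t = c ^ t * (f a + t).choose t := by ring
      _ ≤ _ := Finset.single_le_sum (f := fun j => c ^ j * (f a + t).choose j)
            (fun j _ => Nat.zero_le _) (by simp [Finset.mem_range])
    calc (f a + t).factorial = (f a + t).choose t * (f a).factorial * t.factorial := h1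
    _ ≤ (f a + t).choose t * (f a).factorial * (c ^ t * ∏ i ∈ s, (f i).factorial) :=
        Nat.mul_le_mul_left _ ih
    _ = ((f a + t).choose t * c ^ t) * ((f a).factorial * ∏ i ∈ s, (f i).factorial) := by ring
    _ ≤ (c + 1) ^ (f a + t) * ((f a).factorial * ∏ i ∈ s, (f i).factorial) :=
        Nat.mul_le_mul_right _ h3

open Finset Complex

/-- Recurrence upward from `α + k₀`. -/
lemma aux_gamma_rec_up (α : ℂ) (k₀ : ℕ) (hne : ∀ j : ℕ, k₀ ≤ j → α + j ≠ 0) :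
    ∀ m : ℕ, Complex.Gamma (α + (k₀ + m : ℕ)) =
      Complex.Gamma (α + k₀) * ∏ j ∈ range m, (α + ((k₀ + j : ℕ) : ℂ)) := by
  intro m
  induction m with
  | zero => simp
  | succ m ih =>
    have h1 : (α + ((k₀ + (m+1) : ℕ) : ℂ)) = (α + ((k₀ + m : ℕ) : ℂ)) + 1 := by push_cast; ring
    rw [h1, Complex.Gamma_add_one _ (hne (k₀ + m) (Nat.le_add_right _ _)), ih,
      Finset.prod_range_succ]
    ring

lemma aux_gamma_nat_bound (α : ℂ) : ∃ C : ℝ, 1 ≤ C ∧ ∀ k : ℕ,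
    ‖Complex.Gamma (α + k)‖⁻¹ * (Nat.factorial k) ≤ C ^ (k + 1) := by
  set k₀ : ℕ := ⌈‖α‖⌉₊ + 1 with hk₀def
  have hα₀ : ‖α‖ + 1 ≤ k₀ := by
    have := Nat.le_ceil ‖α‖
    push_cast [hk₀def]; linarith
  have hne : ∀ j : ℕ, k₀ ≤ j → α + j ≠ 0 := by
    intro j hj h0
    have : ‖α‖ = j := by
      have : α = -(j:ℂ) := by linear_combination h0
      rw [this]; simp
    have : (k₀ : ℝ) ≤ j := by exact_mod_cast Nat.cast_le.mpr hj
    linarith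
  have hg₀ : Complex.Gamma (α + k₀) ≠ 0 := by
    apply Complex.Gamma_ne_zero_of_re_pos
    have : (α + k₀).re = α.re + k₀ := by simp
    rw [this]
    have h1 : |α.re| ≤ ‖α‖ := by
      exact Complex.abs_re_le_norm α
    have h2 := neg_abs_le α.re
    linarith
  set g₀ : ℝ := ‖Complex.Gamma (α + k₀)‖ with hg₀def
  have hg₀pos : 0 < g₀ := norm_pos_iff.mpr hg₀
  have hmain : ∀ m : ℕ, ((k₀ + m).factorial : ℝ) * ‖Complex.Gamma (α + (k₀ + m : ℕ))‖⁻¹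
      ≤ g₀⁻¹ * ((2:ℝ) ^ k₀) ^ (k₀ + m) := by
    intro m
    have hprod : ‖Complex.Gamma (α + (k₀ + m : ℕ))‖ = g₀ * ∏ j ∈ range m, ‖α + ((k₀ + j : ℕ) : ℂ)‖ := by
      rw [aux_gamma_rec_up α k₀ hne m, norm_mul, norm_prod]
    have hfac : ∀ j ∈ range m, ((j:ℝ) + 1) ≤ ‖α + ((k₀ + j : ℕ) : ℂ)‖ := by
      intro j _
      have h1 : ((k₀ + j : ℕ) : ℝ) - ‖α‖ ≤ ‖α + ((k₀ + j : ℕ) : ℂ)‖ := by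
        have h3 := norm_add_le (α + ((k₀ + j : ℕ) : ℂ)) (-α)
        have h5 : (α + ((k₀ + j : ℕ) : ℂ)) + (-α) = ((k₀ + j : ℕ) : ℂ) := by ring
        rw [h5, norm_neg] at h3
        have h2 : ‖((k₀ + j : ℕ) : ℂ)‖ = ((k₀ + j : ℕ) : ℝ) := Complex.norm_natCast _
        linarith
      push_cast at h1 ⊢
      linarith [Nat.le_ceil ‖α‖]
    have hlow : g₀ * (m.factorial : ℝ) ≤ ‖Complex.Gamma (α + (k₀ + m : ℕ))‖ := by
      rw [hprod]
      apply mul_le_mul_of_nonneg_left _ hg₀pos.le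
      calc (m.factorial : ℝ) = ∏ j ∈ range m, ((j:ℝ) + 1) := by
            rw_mod_cast [Finset.prod_range_add_one_eq_factorial]
      _ ≤ _ := Finset.prod_le_prod (fun j _ => by positivity) hfac
    have hpos2 : (0:ℝ) < g₀ * m.factorial := by positivity
    have hinv : ‖Complex.Gamma (α + (k₀ + m : ℕ))‖⁻¹ ≤ (g₀ * m.factorial)⁻¹ :=
      inv_anti₀ hpos2 hlow
    have hfle : ((k₀ + m).factorial : ℝ) ≤ (m.factorial : ℝ) * ((2:ℝ) ^ k₀) ^ (k₀ + m) := by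
      have h1 : (k₀ + m).factorial ≤ m.factorial * (k₀ + m) ^ k₀ := by
        have := aux_fact_le_sub_mul_pow k₀ (k₀ + m) (Nat.le_add_right _ _)
        simpa [Nat.add_sub_cancel_left] using this
      have h2 : (k₀ + m) ^ k₀ ≤ (2 ^ k₀) ^ (k₀ + m) := by
        calc (k₀ + m) ^ k₀ ≤ (2 ^ (k₀ + m)) ^ k₀ :=
              Nat.pow_le_pow_left (Nat.lt_two_pow_self (n := k₀ + m)).le _
        _ = (2 ^ k₀) ^ (k₀ + m) := by rw [← pow_mul, ← pow_mul, Nat.mul_comm]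
      calc ((k₀ + m).factorial : ℝ) ≤ ((m.factorial * (k₀ + m) ^ k₀ : ℕ) : ℝ) := by
            exact_mod_cast h1
      _ ≤ ((m.factorial * (2 ^ k₀) ^ (k₀ + m) : ℕ) : ℝ) := by
            exact_mod_cast Nat.mul_le_mul_left _ h2
      _ = _ := by push_cast; ring
    calc ((k₀ + m).factorial : ℝ) * ‖Complex.Gamma (α + (k₀ + m : ℕ))‖⁻¹
        ≤ ((m.factorial : ℝ) * ((2:ℝ) ^ k₀) ^ (k₀ + m)) * (g₀ * m.factorial)⁻¹ := by
          apply mul_le_mul hfle hinv (by positivity) (by positivity)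
    _ = g₀⁻¹ * ((2:ℝ) ^ k₀) ^ (k₀ + m) * (m.factorial * (m.factorial : ℝ)⁻¹) := by
          rw [mul_inv]; ring
    _ ≤ g₀⁻¹ * ((2:ℝ) ^ k₀) ^ (k₀ + m) * 1 := by
          apply mul_le_mul_of_nonneg_left _ (by positivity)
          rw [mul_inv_cancel₀ (by positivity)]
    _ = _ := by ring
  set C : ℝ := (2:ℝ) ^ k₀ + g₀⁻¹ + 1 + ∑ j ∈ range k₀, ‖Complex.Gamma (α + j)‖⁻¹ * (j.factorial : ℝ) with hCdef
  have hsum0 : (0:ℝ) ≤ ∑ j ∈ range k₀, ‖Complex.Gamma (α + j)‖⁻¹ * (j.factorial : ℝ) :=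
    Finset.sum_nonneg fun j _ => by positivity
  have hC1 : 1 ≤ C := by
    have : (0:ℝ) < (2:ℝ) ^ k₀ := by positivity
    have : (0:ℝ) ≤ g₀⁻¹ := by positivity
    rw [hCdef]; linarith
  have hC2 : (2:ℝ) ^ k₀ ≤ C := by
    have : (0:ℝ) ≤ g₀⁻¹ := by positivity
    rw [hCdef]; linarith
  have hCg : g₀⁻¹ ≤ C := by
    have : (0:ℝ) < (2:ℝ) ^ k₀ := by positivity
    rw [hCdef]; linarith
  refine ⟨C, hC1, ?_⟩
  intro k
  rcases lt_or_ge k k₀ with hk | hk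
  · have hmem : ‖Complex.Gamma (α + k)‖⁻¹ * (k.factorial : ℝ)
        ≤ ∑ j ∈ range k₀, ‖Complex.Gamma (α + j)‖⁻¹ * (j.factorial : ℝ) :=
      Finset.single_le_sum (f := fun j : ℕ => ‖Complex.Gamma (α + j)‖⁻¹ * (j.factorial : ℝ))
        (fun j _ => by positivity) (Finset.mem_range.mpr hk)
    have h3 : ‖Complex.Gamma (α + k)‖⁻¹ * (k.factorial : ℝ) ≤ C := by
      have : (0:ℝ) < (2:ℝ) ^ k₀ := by positivity
      have : (0:ℝ) ≤ g₀⁻¹ := by positivity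
      rw [hCdef]; linarith
    calc ‖Complex.Gamma (α + k)‖⁻¹ * (k.factorial : ℝ) ≤ C := h3
    _ ≤ C ^ (k+1) := le_self_pow₀ (by linarith) (Nat.succ_ne_zero _)
  · obtain ⟨m, rfl⟩ : ∃ m, k = k₀ + m := ⟨k - k₀, by omega⟩
    calc ‖Complex.Gamma (α + (k₀ + m : ℕ))‖⁻¹ * ((k₀ + m).factorial : ℝ)
        = ((k₀ + m).factorial : ℝ) * ‖Complex.Gamma (α + (k₀ + m : ℕ))‖⁻¹ := by ring
    _ ≤ g₀⁻¹ * ((2:ℝ) ^ k₀) ^ (k₀ + m) := hmain m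
    _ ≤ C * C ^ (k₀ + m) := by
        apply mul_le_mul hCg (pow_le_pow_left₀ (by positivity) hC2 _) (by positivity) (by linarith)
    _ = C ^ (k₀ + m + 1) := by rw [pow_succ]; ring

lemma aux_gamma_rec_down (α : ℂ) :
    ∀ k : ℕ, (∀ j : ℕ, j < k → α - (j + 1 : ℕ) ≠ 0) →
      Complex.Gamma α = Complex.Gamma (α - k) * ∏ j ∈ Finset.range k, (α - ((j + 1 : ℕ) : ℂ)) := by
  intro k
  induction k with
  | zero => simp
  | succ k ih =>
    intro hne
    have h1 : Complex.Gamma α = Complex.Gamma (α - k) * ∏ j ∈ Finset.range k, (α - ((j + 1 : ℕ) : ℂ)) :=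
      ih fun j hj => hne j (Nat.lt_succ_of_lt hj)
    have h2 : (α - (k:ℂ)) = (α - ((k + 1 : ℕ) : ℂ)) + 1 := by push_cast; ring
    have h3 : Complex.Gamma (α - k) = (α - ((k + 1 : ℕ) : ℂ)) * Complex.Gamma (α - ((k+1:ℕ) : ℂ)) := by
      rw [h2, Complex.Gamma_add_one _ (hne k (Nat.lt_succ_self k))]
    rw [h1, h3, Finset.prod_range_succ]
    have h4 : (α - ((k+1:ℕ):ℂ)) = α - ((k:ℂ) + 1) := by push_cast; ring
    rw [h4]; ring

lemma aux_gamma_neg_nat_bound (α : ℂ) : ∃ C : ℝ, 1 ≤ C ∧ ∀ k : ℕ,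
    ‖Complex.Gamma (α - k)‖⁻¹ ≤ C ^ (k + 1) * (Nat.factorial k) := by
  by_cases hα : ∃ m : ℕ, α = -m
  · obtain ⟨m, rfl⟩ := hα
    refine ⟨1, le_refl _, fun k => ?_⟩
    have h0 : Complex.Gamma (-(m:ℂ) - k) = 0 := by
      have h := Complex.Gamma_neg_nat_eq_zero (m + k)
      have : (-(m:ℂ) - k) = -((m + k : ℕ) : ℂ) := by push_cast; ring
      rw [this, h]
    rw [h0]
    simp only [norm_zero, inv_zero, one_pow, one_mul]
    positivity
  · push_neg at hα
    have hΓ : Complex.Gamma α ≠ 0 := Complex.Gamma_ne_zero hα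
    set c₀ : ℝ := ‖Complex.Gamma α‖⁻¹ with hc₀
    set C : ℝ := c₀ + (1 + ‖α‖) with hC
    have hC1 : 1 ≤ C := by
      have : (0:ℝ) ≤ c₀ := by positivity
      have : (0:ℝ) ≤ ‖α‖ := norm_nonneg _
      rw [hC]; linarith
    refine ⟨C, hC1, fun k => ?_⟩
    by_cases hz : Complex.Gamma (α - k) = 0
    · rw [hz]; simp; positivity
    · have hne : ∀ j : ℕ, j < k → α - (j + 1 : ℕ) ≠ 0 := by
        intro j hj h0
        have hαval : α = ((j + 1 : ℕ) : ℂ) := by linear_combination h0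
        apply hz
        have : α - k = -(((k - (j+1) : ℕ)) : ℂ) := by
          rw [hαval]
          have : (((k - (j+1) : ℕ)) : ℂ) = (k : ℂ) - ((j+1:ℕ) : ℂ) := by
            push_cast [Nat.cast_sub hj]
            ring
          rw [this]; ring
        rw [this, Complex.Gamma_neg_nat_eq_zero]
      have hrec := aux_gamma_rec_down α k hne
      have hΓk : ‖Complex.Gamma (α - k)‖ ≠ 0 := norm_ne_zero_iff.mpr hz
      have hnorm : ‖Complex.Gamma α‖ = ‖Complex.Gamma (α - k)‖ * ∏ j ∈ Finset.range k, ‖α - ((j+1:ℕ):ℂ)‖ := by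
        rw [hrec, norm_mul, norm_prod]
      have hPne : (∏ j ∈ Finset.range k, ‖α - ((j+1:ℕ):ℂ)‖) ≠ 0 := by
        intro h0
        have h5 : ‖Complex.Gamma α‖ = 0 := by rw [hnorm, h0, mul_zero]
        exact (norm_ne_zero_iff.mpr hΓ) h5
      have hinv : ‖Complex.Gamma (α - k)‖⁻¹ = (∏ j ∈ Finset.range k, ‖α - ((j+1:ℕ):ℂ)‖) * c₀ := by
        have h9 : ‖Complex.Gamma (α - k)‖ * ((∏ j ∈ Finset.range k, ‖α - ((j+1:ℕ):ℂ)‖) * c₀) = 1 := by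
          rw [hc₀, ← mul_assoc, ← hnorm, mul_inv_cancel₀ (norm_ne_zero_iff.mpr hΓ)]
        exact inv_eq_of_mul_eq_one_right h9
      have hbound : (∏ j ∈ Finset.range k, ‖α - ((j+1:ℕ):ℂ)‖) ≤ (1 + ‖α‖) ^ k * (Nat.factorial k) := by
        have h1 : ∀ j ∈ Finset.range k, ‖α - ((j+1:ℕ):ℂ)‖ ≤ (1 + ‖α‖) * ((j:ℝ) + 1) := by
          intro j _
          have h2 : ‖α - ((j+1:ℕ):ℂ)‖ ≤ ‖α‖ + ((j:ℝ)+1) := by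
            have := norm_sub_le α ((j+1:ℕ):ℂ)
            have h3 : ‖((j+1:ℕ):ℂ)‖ = ((j:ℝ)+1) := by
              rw [Complex.norm_natCast]; push_cast; ring
            linarith
          have h4 : ‖α‖ + ((j:ℝ)+1) ≤ (1 + ‖α‖) * ((j:ℝ)+1) := by
            nlinarith [mul_nonneg (norm_nonneg α) (Nat.cast_nonneg j : (0:ℝ) ≤ (j:ℝ))]
          linarith
        calc (∏ j ∈ Finset.range k, ‖α - ((j+1:ℕ):ℂ)‖)
            ≤ ∏ j ∈ Finset.range k, (1 + ‖α‖) * ((j:ℝ) + 1) :=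
              Finset.prod_le_prod (fun j _ => norm_nonneg _) h1
        _ = (1 + ‖α‖) ^ k * ∏ j ∈ Finset.range k, ((j:ℝ) + 1) := by
              rw [Finset.prod_mul_distrib, Finset.prod_const, Finset.card_range]
        _ = (1 + ‖α‖) ^ k * (Nat.factorial k) := by
              norm_cast
              rw [Finset.prod_range_add_one_eq_factorial]
    -- combine
      rw [hinv]
      calc (∏ j ∈ Finset.range k, ‖α - ((j+1:ℕ):ℂ)‖) * c₀
          ≤ ((1 + ‖α‖) ^ k * (Nat.factorial k)) * c₀ := by
            apply mul_le_mul_of_nonneg_right hbound (by positivity)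
      _ = (c₀ * (1 + ‖α‖) ^ k) * (Nat.factorial k) := by ring
      _ ≤ (C * C ^ k) * (Nat.factorial k) := by
            have h0c : (0:ℝ) ≤ c₀ := by rw [hc₀]; positivity
            have hb1 : c₀ ≤ C := by rw [hC]; nlinarith [norm_nonneg α]
            have hb2 : (1 + ‖α‖) ≤ C := by rw [hC]; linarith
            have hmm := mul_le_mul hb1 (pow_le_pow_left₀ (by positivity) hb2 k) (by positivity)
              (by linarith)
            exact mul_le_mul_of_nonneg_right hmm (by positivity)
      _ = C ^ (k+1) * (Nat.factorial k) := by rw [pow_succ]; ring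

lemma aux_gamma_int_bound (α : ℂ) : ∃ C : ℝ, 1 ≤ C ∧ ∀ k : ℤ,
    ‖Complex.Gamma (α + k)‖⁻¹ * (Nat.factorial k.toNat) ≤
      C ^ (k.natAbs + 1) * (Nat.factorial (-k).toNat) := by
  obtain ⟨C₁, hC₁, h₁⟩ := aux_gamma_nat_bound α
  obtain ⟨C₂, hC₂, h₂⟩ := aux_gamma_neg_nat_bound α
  refine ⟨C₁ * C₂, one_le_mul_of_one_le_of_one_le hC₁ hC₂, fun k => ?_⟩
  rcases le_or_gt 0 k with hk | hk
  · lift k to ℕ using hk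
    have e1 : ((k:ℤ).toNat) = k := Int.toNat_natCast k
    have e2 : ((-(k:ℤ)).toNat) = 0 := by omega
    have e3 : ((k:ℤ).natAbs) = k := by simp
    rw [e1, e2, e3, Nat.factorial_zero]
    have h := h₁ k
    have hle : C₁ ^ (k+1) ≤ (C₁*C₂) ^ (k+1) := by
      apply pow_le_pow_left₀ (by linarith) _ _
      nlinarith
    push_cast
    push_cast at h
    rw [mul_one]
    exact le_trans h hle
  · obtain ⟨m, rfl⟩ : ∃ m : ℕ, k = -(m:ℤ) := ⟨k.natAbs, by omega⟩
    have e1 : ((-(m:ℤ)).toNat) = 0 := by omega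
    have e2 : ((-(-(m:ℤ))).toNat) = m := by omega
    have e3 : ((-(m:ℤ)).natAbs) = m := by omega
    rw [e1, e2, e3, Nat.factorial_zero]
    have h := h₂ m
    have harg : (Int.cast (-(m:ℤ)) : ℂ) = -(m : ℂ) := by push_cast; ring
    rw [harg, ← sub_eq_add_neg]
    have hle : C₂ ^ (m+1) * (Nat.factorial m : ℝ) ≤ (C₁*C₂) ^ (m+1) * (Nat.factorial m : ℝ) := by
      apply mul_le_mul_of_nonneg_right _ (by positivity)
      apply pow_le_pow_left₀ (by linarith) _ _
      nlinarith
    push_cast at h hle ⊢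
    rw [mul_one]
    exact le_trans h hle

lemma aux_summable_pi_prod {g : ℕ → ℝ} (hg : Summable g) (hg0 : ∀ n, 0 ≤ g n) (r : ℕ) :
    Summable (fun d : Fin r → ℕ => ∏ a, g (d a)) := by
  induction r with
  | zero =>
      haveI : Unique (Fin 0 → ℕ) := ⟨⟨fun i => i.elim0⟩, fun f => funext fun i => i.elim0⟩
      exact Summable.of_finite
  | succ r ih =>
      have hg0' : (0 : ℕ → ℝ) ≤ g := fun n => hg0 n
      set F : (Fin r → ℕ) → ℝ := fun d => ∏ a, g (d a) with hF
      have hF0 : (0 : (Fin r → ℕ) → ℝ) ≤ F :=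
        fun d => Finset.prod_nonneg fun a _ => hg0 _
      have h2 : Summable (fun p : ℕ × (Fin r → ℕ) => g p.1 * F p.2) :=
        Summable.mul_of_nonneg hg ih hg0' hF0
      have h3 := ((Fin.consEquiv (fun _ : Fin (r+1) => ℕ)).symm.summable_iff
        (f := fun p : ℕ × (Fin r → ℕ) => g p.1 * F p.2)).mpr h2
      apply h3.congr
      intro d
      simp only [Fin.consEquiv, Equiv.coe_fn_symm_mk, Function.comp, hF]
      rw [Fin.prod_univ_succ]
      rfl

/-- Absolute convergence of the generalized Mittag–Leffler series associated with an
integer matrix `M = (m_i^a)` satisfying the positivity conditions `∑_i m_i^a > 0`. -/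
theorem genML_summable (r N : ℕ) (M : Fin r → Fin N → ℤ)
    (hpos : ∀ a : Fin r, 0 < ∑ i : Fin N, M a i) (s : Fin r → ℂ) (z : ℂ) :
    Summable (fun d : Fin r → ℕ =>
      ‖z ^ (∑ a : Fin r, (∑ i : Fin N, M a i) * (d a : ℤ)) /
        ∏ i : Fin N, Complex.Gamma (1 + ∑ a : Fin r, (M a i : ℂ) * ((d a : ℂ) + s a))‖) := by
  classical
  set B : ℕ := 1 + ∑ a : Fin r, ∑ i : Fin N, (M a i).natAbs with hB
  have hBa : ∀ (a : Fin r) (i : Fin N), (M a i).natAbs ≤ B := by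
    intro a i
    have h1 : (M a i).natAbs ≤ ∑ i' : Fin N, (M a i').natAbs :=
      Finset.single_le_sum (f := fun i' => (M a i').natAbs) (fun _ _ => Nat.zero_le _)
        (Finset.mem_univ i)
    have h2 : (∑ i' : Fin N, (M a i').natAbs) ≤ ∑ a' : Fin r, ∑ i' : Fin N, (M a' i').natAbs :=
      Finset.single_le_sum (f := fun a' => ∑ i' : Fin N, (M a' i').natAbs)
        (fun _ _ => Nat.zero_le _) (Finset.mem_univ a)
    omega
  set α : Fin N → ℂ := fun i => 1 + ∑ a : Fin r, (M a i : ℂ) * s a with hα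
  choose C hC1 hCb using fun i : Fin N => aux_gamma_int_bound (α i)
  set C₀ : ℝ := 1 + ∑ i : Fin N, C i with hC₀
  have hC₀1 : 1 ≤ C₀ := by
    have h : (0:ℝ) ≤ ∑ i : Fin N, C i :=
      Finset.sum_nonneg fun i _ => le_trans zero_le_one (hC1 i)
    rw [hC₀]; linarith
  have hC₀i : ∀ i, C i ≤ C₀ := by
    intro i
    have h := Finset.single_le_sum (f := C) (fun j _ => le_trans zero_le_one (hC1 j))
      (Finset.mem_univ i)
    rw [hC₀]; linarith
  set X : ℝ := (1 + ‖z‖) * C₀ * ((N : ℝ) + 1) with hX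
  have hz0 : (0:ℝ) ≤ ‖z‖ := norm_nonneg z
  have hN0 : (0:ℝ) ≤ (N:ℝ) := Nat.cast_nonneg N
  have h1z : (1:ℝ) ≤ 1 + ‖z‖ := by linarith
  have h1N : (1:ℝ) ≤ (N:ℝ) + 1 := by linarith
  have hC₀0 : (0:ℝ) ≤ C₀ := by linarith
  have hX1 : 1 ≤ X := by
    rw [hX]
    exact one_le_mul_of_one_le_of_one_le (one_le_mul_of_one_le_of_one_le h1z hC₀1) h1N
  have hXz : 1 + ‖z‖ ≤ X := by
    rw [hX, mul_assoc]
    exact le_mul_of_one_le_right (by linarith) (one_le_mul_of_one_le_of_one_le hC₀1 h1N)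
  have hXC : C₀ ≤ X := by
    rw [hX]
    calc C₀ = 1 * C₀ * 1 := by ring
    _ ≤ (1 + ‖z‖) * C₀ * ((N:ℝ)+1) :=
        mul_le_mul (mul_le_mul_of_nonneg_right h1z hC₀0) h1N zero_le_one (by positivity)
  have hXN : (N:ℝ) + 1 ≤ X := by
    rw [hX]
    calc (N:ℝ)+1 = 1 * ((N:ℝ)+1) := by ring
    _ ≤ ((1 + ‖z‖) * C₀) * ((N:ℝ)+1) :=
        mul_le_mul_of_nonneg_right (one_le_mul_of_one_le_of_one_le h1z hC₀1) (by linarith)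
  set E : ℝ := X ^ (3 * (N * B) + N) with hE
  have hE1 : 1 ≤ E := one_le_pow₀ hX1
  -- the key pointwise bound
  have key : ∀ d : Fin r → ℕ,
      ‖z ^ (∑ a : Fin r, (∑ i : Fin N, M a i) * (d a : ℤ)) /
        ∏ i : Fin N, Complex.Gamma (1 + ∑ a : Fin r, (M a i : ℂ) * ((d a : ℂ) + s a))‖
      ≤ E * ∏ a : Fin r, (E ^ (d a) / (Nat.factorial (d a) : ℝ)) := by
    intro d
    set n : ℕ := ∑ a, d a with hn
    set k : Fin N → ℤ := fun i => ∑ a : Fin r, M a i * (d a : ℤ) with hk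
    set T : ℤ := ∑ a : Fin r, (∑ i : Fin N, M a i) * (d a : ℤ) with hT
    have hTk : T = ∑ i : Fin N, k i := by
      rw [hT]; simp only [hk]
      simp_rw [Finset.sum_mul]
      exact Finset.sum_comm
    have hnT : (n:ℤ) ≤ T := by
      rw [hT, hn]
      push_cast
      apply Finset.sum_le_sum
      intro a _
      have h1 : (1:ℤ) ≤ ∑ i, M a i := hpos a
      have h2 : (0:ℤ) ≤ (d a : ℤ) := Int.ofNat_nonneg _
      nlinarith
    have hT0 : (0:ℤ) ≤ T := le_trans (by positivity) hnT
    set Tn : ℕ := T.toNat with hTndef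
    have hTnT : (Tn : ℤ) = T := Int.toNat_of_nonneg hT0
    have hnTn : n ≤ Tn := by omega
    have hkabs : ∀ i, (k i).natAbs ≤ B * n := by
      intro i
      calc (k i).natAbs ≤ ∑ a : Fin r, (M a i * (d a:ℤ)).natAbs := nat_abs_sum_le _ _
      _ = ∑ a : Fin r, (M a i).natAbs * d a := by
          apply Finset.sum_congr rfl; intro a _
          rw [Int.natAbs_mul, Int.natAbs_natCast]
      _ ≤ ∑ a : Fin r, B * d a := Finset.sum_le_sum fun a _ => Nat.mul_le_mul_right _ (hBa a i)
      _ = B * n := by rw [hn, Finset.mul_sum]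
    have hTnbound : Tn ≤ N * (B * n) := by
      have h1 : T ≤ ∑ i : Fin N, ((k i).natAbs : ℤ) := by
        rw [hTk]
        exact Finset.sum_le_sum fun i _ => Int.le_natAbs
      have h2 : (∑ i : Fin N, ((k i).natAbs : ℤ)) ≤ ∑ _i : Fin N, ((B * n : ℕ) : ℤ) :=
        Finset.sum_le_sum fun i _ => by exact_mod_cast hkabs i
      have h3 : (∑ _i : Fin N, ((B*n:ℕ):ℤ)) = ((N * (B*n) : ℕ) : ℤ) := by
        rw [Finset.sum_const, Finset.card_univ, Fintype.card_fin]
        push_cast; ring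
      omega
    set p : ℕ := ∑ i : Fin N, (k i).toNat with hp
    set q : ℕ := ∑ i : Fin N, (-(k i)).toNat with hq
    have hpq : p = Tn + q := by
      have h1 : (p:ℤ) - (q:ℤ) = T := by
        rw [hTk, hp, hq]
        push_cast
        rw [← Finset.sum_sub_distrib]
        apply Finset.sum_congr rfl
        intro i _
        omega
      omega
    have hpbound : p ≤ N * (B * n) := by
      have h1 : ∀ i, (k i).toNat ≤ B * n := fun i => by have := hkabs i; omega
      calc p ≤ ∑ _i : Fin N, B * n := Finset.sum_le_sum fun i _ => h1 i
      _ = N * (B*n) := by rw [Finset.sum_const, Finset.card_univ, Fintype.card_fin, smul_eq_mul]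
    -- the key ℕ inequality
    have hnat : (∏ i : Fin N, Nat.factorial (-(k i)).toNat) * Nat.factorial n
        ≤ N ^ p * ∏ i : Fin N, Nat.factorial (k i).toNat := by
      have h1 : (∏ i : Fin N, Nat.factorial (-(k i)).toNat) ≤ Nat.factorial q :=
        Nat.le_of_dvd (Nat.factorial_pos q) (Nat.prod_factorial_dvd_factorial_sum _ _)
      have h2 : Nat.factorial q * Nat.factorial n ≤ Nat.factorial (q + n) :=
        Nat.le_of_dvd (Nat.factorial_pos _) (Nat.factorial_mul_factorial_dvd_factorial_add q n)
      have h3 : Nat.factorial (q+n) ≤ Nat.factorial p := Nat.factorial_le (by omega)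
      have h4 : Nat.factorial p ≤ N ^ p * ∏ i : Fin N, Nat.factorial (k i).toNat := by
        have h5 := aux_factorial_sum_le (Finset.univ : Finset (Fin N)) (fun i => (k i).toNat)
        rw [Finset.card_univ, Fintype.card_fin] at h5
        exact h5
      calc (∏ i : Fin N, Nat.factorial (-(k i)).toNat) * Nat.factorial n
          ≤ Nat.factorial q * Nat.factorial n := Nat.mul_le_mul_right _ h1
      _ ≤ Nat.factorial (q+n) := h2
      _ ≤ Nat.factorial p := h3
      _ ≤ _ := h4
    -- rewrite the term
    have harg : ∀ i : Fin N, (1 + ∑ a : Fin r, (M a i : ℂ) * ((d a : ℂ) + s a))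
        = α i + (k i : ℂ) := by
      intro i
      simp only [hα, hk]
      push_cast
      simp_rw [mul_add]
      rw [Finset.sum_add_distrib]
      ring
    have hprodG : (∏ i : Fin N, Complex.Gamma (1 + ∑ a : Fin r, (M a i : ℂ) * ((d a : ℂ) + s a)))
        = ∏ i : Fin N, Complex.Gamma (α i + (k i : ℂ)) :=
      Finset.prod_congr rfl fun i _ => by rw [harg i]
    have hzT : z ^ T = z ^ Tn := by rw [← hTnT, zpow_natCast]
    have hrw : ‖z ^ T / ∏ i : Fin N, Complex.Gamma (1 + ∑ a : Fin r, (M a i : ℂ) * ((d a : ℂ) + s a))‖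
        = ‖z‖ ^ Tn * ∏ i : Fin N, ‖Complex.Gamma (α i + (k i : ℂ))‖⁻¹ := by
      rw [hprodG, hzT, norm_div, norm_pow, norm_prod, div_eq_mul_inv,
        ← Finset.prod_inv_distrib]
    rw [hrw]
    -- bound the Gamma product
    have hstep1 : (∏ i : Fin N, ‖Complex.Gamma (α i + (k i : ℂ))‖⁻¹)
        * ((∏ i : Fin N, Nat.factorial (k i).toNat : ℕ) : ℝ)
        ≤ C₀ ^ (N * (B*n) + N) * ((∏ i : Fin N, Nat.factorial (-(k i)).toNat : ℕ) : ℝ) := by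
      have hper : ∀ i : Fin N,
          ‖Complex.Gamma (α i + (k i : ℂ))‖⁻¹ * ((Nat.factorial (k i).toNat : ℕ) : ℝ)
          ≤ C₀ ^ ((k i).natAbs + 1) * ((Nat.factorial (-(k i)).toNat : ℕ) : ℝ) := by
        intro i
        refine le_trans (hCb i (k i)) ?_
        apply mul_le_mul_of_nonneg_right _ (by positivity)
        exact pow_le_pow_left₀ (le_trans zero_le_one (hC1 i)) (hC₀i i) _
      calc (∏ i : Fin N, ‖Complex.Gamma (α i + (k i : ℂ))‖⁻¹)
            * ((∏ i : Fin N, Nat.factorial (k i).toNat : ℕ) : ℝ)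
          = ∏ i : Fin N, (‖Complex.Gamma (α i + (k i : ℂ))‖⁻¹ * ((Nat.factorial (k i).toNat : ℕ) : ℝ)) := by
            rw [Finset.prod_mul_distrib]
            push_cast
            ring
      _ ≤ ∏ i : Fin N, (C₀ ^ ((k i).natAbs + 1) * ((Nat.factorial (-(k i)).toNat : ℕ) : ℝ)) := by
            apply Finset.prod_le_prod
            · intro i _; positivity
            · intro i _; exact hper i
      _ = (∏ i : Fin N, C₀ ^ ((k i).natAbs + 1)) * ((∏ i : Fin N, Nat.factorial (-(k i)).toNat : ℕ) : ℝ) := by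
            rw [Finset.prod_mul_distrib]
            push_cast
            ring
      _ ≤ C₀ ^ (N * (B*n) + N) * ((∏ i : Fin N, Nat.factorial (-(k i)).toNat : ℕ) : ℝ) := by
            apply mul_le_mul_of_nonneg_right _ (by positivity)
            rw [Finset.prod_pow_eq_pow_sum]
            apply pow_le_pow_right₀ hC₀1
            have h6 : ∀ i : Fin N, (k i).natAbs + 1 ≤ B * n + 1 := fun i => by
              have := hkabs i; omega
            calc (∑ i : Fin N, ((k i).natAbs + 1)) ≤ ∑ _i : Fin N, (B * n + 1) :=
                  Finset.sum_le_sum fun i _ => h6 i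
            _ = N * (B*n) + N := by
                  rw [Finset.sum_const, Finset.card_univ, Fintype.card_fin, smul_eq_mul]; ring
    -- combine with hnat
    have hG : (∏ i : Fin N, ‖Complex.Gamma (α i + (k i : ℂ))‖⁻¹) * (Nat.factorial n : ℝ)
        ≤ C₀ ^ (N * (B*n) + N) * (N:ℝ) ^ p := by
      set G : ℝ := ∏ i : Fin N, ‖Complex.Gamma (α i + (k i : ℂ))‖⁻¹ with hGdef
      set PP : ℝ := ((∏ i : Fin N, Nat.factorial (k i).toNat : ℕ) : ℝ) with hPP
      set QQ : ℝ := ((∏ i : Fin N, Nat.factorial (-(k i)).toNat : ℕ) : ℝ) with hQQ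
      have hPPpos : 0 < PP := by
        rw [hPP]
        have h : 0 < ∏ i : Fin N, Nat.factorial (k i).toNat :=
          Finset.prod_pos fun i _ => Nat.factorial_pos _
        exact_mod_cast h
      have hs2 : QQ * (Nat.factorial n : ℝ) ≤ (N:ℝ) ^ p * PP := by
        rw [hQQ, hPP]
        exact_mod_cast hnat
      have hchain : (G * (Nat.factorial n : ℝ)) * PP ≤ (C₀ ^ (N * (B*n) + N) * (N:ℝ) ^ p) * PP := by
        have hGnn : 0 ≤ G := Finset.prod_nonneg fun i _ => by positivity
        calc (G * (Nat.factorial n : ℝ)) * PP = (G * PP) * (Nat.factorial n : ℝ) := by ring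
        _ ≤ (C₀ ^ (N * (B*n) + N) * QQ) * (Nat.factorial n : ℝ) := by
              apply mul_le_mul_of_nonneg_right hstep1 (by positivity)
        _ = C₀ ^ (N * (B*n) + N) * (QQ * (Nat.factorial n : ℝ)) := by ring
        _ ≤ C₀ ^ (N * (B*n) + N) * ((N:ℝ) ^ p * PP) := by
              apply mul_le_mul_of_nonneg_left hs2 (by positivity)
        _ = (C₀ ^ (N * (B*n) + N) * (N:ℝ) ^ p) * PP := by ring
      exact le_of_mul_le_mul_right hchain hPPpos
    -- final assembly
    have hfacpos : (0:ℝ) < (Nat.factorial n : ℝ) := by exact_mod_cast Nat.factorial_pos n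
    have hGineq : (∏ i : Fin N, ‖Complex.Gamma (α i + (k i : ℂ))‖⁻¹)
        ≤ C₀ ^ (N * (B*n) + N) * (N:ℝ) ^ p / (Nat.factorial n : ℝ) := by
      rw [le_div_iff₀ hfacpos]
      exact hG
    have hzn : ‖z‖ ^ Tn ≤ X ^ (N * (B*n)) := by
      calc ‖z‖ ^ Tn ≤ X ^ Tn := by
            apply pow_le_pow_left₀ hz0 (by linarith) _
      _ ≤ X ^ (N * (B*n)) := pow_le_pow_right₀ hX1 hTnbound
    have hCX : C₀ ^ (N * (B*n) + N) ≤ X ^ (N * (B*n) + N) :=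
      pow_le_pow_left₀ (by linarith) hXC _
    have hNX : (N:ℝ) ^ p ≤ X ^ (N * (B*n)) := by
      calc (N:ℝ) ^ p ≤ X ^ p := pow_le_pow_left₀ hN0 (by linarith) _
      _ ≤ X ^ (N * (B*n)) := pow_le_pow_right₀ hX1 hpbound
    have htotal : ‖z‖ ^ Tn * (∏ i : Fin N, ‖Complex.Gamma (α i + (k i : ℂ))‖⁻¹)
        ≤ X ^ (3 * (N*B*n) + N) / (Nat.factorial n : ℝ) := by
      have hGnn : 0 ≤ ∏ i : Fin N, ‖Complex.Gamma (α i + (k i : ℂ))‖⁻¹ :=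
        Finset.prod_nonneg fun i _ => by positivity
      calc ‖z‖ ^ Tn * (∏ i : Fin N, ‖Complex.Gamma (α i + (k i : ℂ))‖⁻¹)
          ≤ X ^ (N * (B*n)) * (C₀ ^ (N * (B*n) + N) * (N:ℝ) ^ p / (Nat.factorial n : ℝ)) := by
            apply mul_le_mul hzn hGineq hGnn (by positivity)
      _ ≤ X ^ (N * (B*n)) * (X ^ (N * (B*n) + N) * X ^ (N * (B*n)) / (Nat.factorial n : ℝ)) := by
            apply mul_le_mul_of_nonneg_left _ (by positivity)
            have hmid : C₀ ^ (N * (B*n) + N) * (N:ℝ) ^ p ≤ X ^ (N * (B*n) + N) * X ^ (N * (B*n)) :=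
              mul_le_mul hCX hNX (by positivity) (by positivity)
            rw [div_eq_mul_inv, div_eq_mul_inv]
            exact mul_le_mul_of_nonneg_right hmid (by positivity)
      _ = X ^ (3 * (N*B*n) + N) / (Nat.factorial n : ℝ) := by
            rw [div_eq_mul_inv, ← mul_assoc, ← pow_add, ← pow_add, ← div_eq_mul_inv]
            congr 2
            ring
    have hexp : 3 * (N*B*n) + N ≤ (3 * (N*B) + N) * (n+1) := by
      have h : (3 * (N*B) + N) * (n+1) = 3*(N*B*n) + N + (3*(N*B) + N*n) := by ring
      rw [h]
      exact Nat.le_add_right _ _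
    have hEpow : X ^ (3 * (N*B*n) + N) ≤ E ^ (n+1) := by
      rw [hE, ← pow_mul]
      exact pow_le_pow_right₀ hX1 hexp
    have hprodfac : ((∏ a : Fin r, Nat.factorial (d a) : ℕ) : ℝ) ≤ (Nat.factorial n : ℝ) := by
      exact_mod_cast Nat.le_of_dvd (Nat.factorial_pos n)
        (by rw [hn]; exact Nat.prod_factorial_dvd_factorial_sum _ _)
    have hprodfacpos : (0:ℝ) < ((∏ a : Fin r, Nat.factorial (d a) : ℕ) : ℝ) := by
      have : 0 < ∏ a : Fin r, Nat.factorial (d a) :=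
        Finset.prod_pos fun a _ => Nat.factorial_pos _
      exact_mod_cast this
    calc ‖z‖ ^ Tn * (∏ i : Fin N, ‖Complex.Gamma (α i + (k i : ℂ))‖⁻¹)
        ≤ X ^ (3 * (N*B*n) + N) / (Nat.factorial n : ℝ) := htotal
    _ ≤ E ^ (n+1) / (Nat.factorial n : ℝ) := by
        rw [div_eq_mul_inv, div_eq_mul_inv]
        exact mul_le_mul_of_nonneg_right hEpow (by positivity)
    _ = E * (E ^ n / (Nat.factorial n : ℝ)) := by rw [pow_succ]; ring
    _ ≤ E * (E ^ n / ((∏ a : Fin r, Nat.factorial (d a) : ℕ) : ℝ)) := by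
        apply mul_le_mul_of_nonneg_left _ (by linarith)
        exact div_le_div_of_nonneg_left (by positivity) hprodfacpos hprodfac
    _ = E * ∏ a : Fin r, (E ^ (d a) / (Nat.factorial (d a) : ℝ)) := by
        have hEn : E ^ n = ∏ a : Fin r, E ^ (d a) := by
          rw [hn]; exact (Finset.prod_pow_eq_pow_sum _ _ _).symm
        rw [hEn, Nat.cast_prod, ← Finset.prod_div_distrib]
  -- conclude
  have hgsum := Real.summable_pow_div_factorial E
  exact Summable.of_nonneg_of_le (fun d => norm_nonneg _) key
    (Summable.mul_left E (aux_summable_pi_prod hgsum (fun m => by positivity) r))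
end

section
/- Let n ≥ 2 and E(s,z) = Σ_{k=0}^∞ z^{kn+ns}/Γ(1+k+s)^n. For each j with 0 ≤ j ≤ n−1, the function Φ_j(z) := (∂^j/∂s^j)|_{s=0} E(s,z) satisfies the scalar differential equation (z d/dz)^n Φ_j(z) = (nz)^n Φ_j(z). -/
open Complex Metric Finset


lemma entire_deriv {f : ℂ → ℂ} (hf : Differentiable ℂ f) : Differentiable ℂ (deriv f) := by
  have h : ContDiff ℂ ((1:ℕ) + 1) f := hf.contDiff
  exact ((contDiff_succ_iff_deriv.mp h).2.2).differentiable (by simp)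

lemma entire_iteratedDeriv {f : ℂ → ℂ} (hf : Differentiable ℂ f) (m : ℕ) :
    Differentiable ℂ (iteratedDeriv m f) := by
  induction m generalizing f with
  | zero => simpa using hf
  | succ m ih => rw [iteratedDeriv_succ']; exact ih (entire_deriv hf)

lemma deriv_bound {f : ℂ → ℂ} (hf : Differentiable ℂ f) {M R : ℝ}
    (hb : ∀ z : ℂ, ‖z‖ ≤ R + 1 → ‖f z‖ ≤ M) :
    ∀ z : ℂ, ‖z‖ ≤ R → ‖deriv f z‖ ≤ M := by
  intro z hz
  have h0R : (0:ℝ) ≤ R := le_trans (norm_nonneg z) hz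
  have h1 : deriv f z = Complex.cderiv 1 f z := by
    refine (Complex.cderiv_eq_deriv (U := ball (0:ℂ) (R+2)) isOpen_ball
      hf.differentiableOn one_pos ?_).symm
    intro x hx
    have h2 : ‖x - z‖ ≤ 1 := by simpa [dist_eq_norm] using mem_closedBall_iff_norm.mp hx
    have h3 : ‖x‖ ≤ R + 1 := by
      calc ‖x‖ ≤ ‖x - z‖ + ‖z‖ := by simpa using norm_add_le (x - z) z
      _ ≤ R + 1 := by linarith
    exact mem_ball_iff_norm.mpr (by simpa using lt_of_le_of_lt h3 (by linarith))
  rw [h1]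
  have key : ∀ x ∈ sphere z 1, ‖f x‖ ≤ M := by
    intro x hx
    have h2 : ‖x - z‖ = 1 := by simpa [dist_eq_norm] using mem_sphere_iff_norm.mp hx
    apply hb
    calc ‖x‖ ≤ ‖x - z‖ + ‖z‖ := by simpa using norm_add_le (x - z) z
    _ ≤ R + 1 := by rw [h2]; linarith
  simpa using Complex.norm_cderiv_le one_pos key

section
variable {F : ℕ → ℂ → ℂ}

/-- boundedness hypothesis: on every ball a summable uniform bound -/
def BddFam (F : ℕ → ℂ → ℂ) : Prop :=
  ∀ R : ℝ, ∃ u : ℕ → ℝ, Summable u ∧ ∀ (k : ℕ) (z : ℂ), ‖z‖ ≤ R → ‖F k z‖ ≤ u k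

lemma BddFam.deriv (hd : ∀ k, Differentiable ℂ (F k)) (hb : BddFam F) :
    BddFam (fun k => deriv (F k)) := by
  intro R
  obtain ⟨u, hu, hle⟩ := hb (R + 1)
  exact ⟨u, hu, fun k z hz => deriv_bound (hd k) (fun x hx => hle k x hx) z hz⟩

lemma hasSum_deriv (hd : ∀ k, Differentiable ℂ (F k)) (hb : BddFam F) (z : ℂ) :
    HasSum (fun k => deriv (F k) z) (deriv (fun x => ∑' k, F k x) z) := by
  obtain ⟨u, hu, hle⟩ := hb (‖z‖ + 1)
  refine Complex.hasSum_deriv_of_summable_norm (U := ball (0:ℂ) (‖z‖+1)) hu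
    (fun k => (hd k).differentiableOn) isOpen_ball ?_ ?_
  · intro k x hx
    exact hle k x (le_of_lt (by simpa using mem_ball_iff_norm.mp hx))
  · exact mem_ball_iff_norm.mpr (by simpa using lt_add_of_pos_right ‖z‖ one_pos)

lemma hasSum_iteratedDeriv (hd : ∀ k, Differentiable ℂ (F k)) (hb : BddFam F) (m : ℕ) (z : ℂ) :
    HasSum (fun k => iteratedDeriv m (F k) z) (iteratedDeriv m (fun x => ∑' k, F k x) z) := by
  induction m generalizing F with
  | zero =>
    simp only [iteratedDeriv_zero]
    obtain ⟨u, hu, hle⟩ := hb ‖z‖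
    exact (Summable.of_norm_bounded hu (fun k => hle k z le_rfl)).hasSum
  | succ m ih =>
    have hder : (fun x => ∑' k, deriv (F k) x) = deriv (fun x => ∑' k, F k x) := by
      funext x
      exact (hasSum_deriv hd hb x).tsum_eq
    have := ih (F := fun k => deriv (F k)) (fun k => entire_deriv (hd k)) (hb.deriv hd)
    rw [hder] at this
    simpa only [iteratedDeriv_succ'] using this
end


lemma iteratedDeriv_add' {f g : ℂ → ℂ} (m : ℕ) (x : ℂ)
    (hf : Differentiable ℂ f) (hg : Differentiable ℂ g) :
    iteratedDeriv m (fun z => f z + g z) x = iteratedDeriv m f x + iteratedDeriv m g x := by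
  rw [← iteratedDerivWithin_univ, ← iteratedDerivWithin_univ, ← iteratedDerivWithin_univ]
  exact iteratedDerivWithin_add (Set.mem_univ x) uniqueDiffOn_univ
    hf.contDiff.contDiffWithinAt hg.contDiff.contDiffWithinAt

lemma iteratedDeriv_cmul {f : ℂ → ℂ} (m : ℕ) (x : ℂ) (c : ℂ) (hf : Differentiable ℂ f) :
    iteratedDeriv m (fun z => c * f z) x = c * iteratedDeriv m f x := by
  rw [← iteratedDerivWithin_univ, ← iteratedDerivWithin_univ]
  exact iteratedDerivWithin_const_mul (Set.mem_univ x) uniqueDiffOn_univ c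
    hf.contDiff.contDiffWithinAt

lemma deriv_mul_exp (a : ℂ → ℂ) (ha : Differentiable ℂ a) (α β w : ℂ) :
    deriv (fun s => a s * Complex.exp ((α + β * s) * w))
      = fun s => (deriv a s + (β * w) * a s) * Complex.exp ((α + β * s) * w) := by
  funext s
  have h1 : HasDerivAt (fun s : ℂ => (α + β * s) * w) (β * w) s := by
    simpa using (((hasDerivAt_const s α).add ((hasDerivAt_id s).const_mul β)).mul_const w)
  have h2 := h1.cexp
  have h3 : HasDerivAt (fun s => a s * Complex.exp ((α + β * s) * w)) _ s := ((ha s).hasDerivAt.mul h2)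
  rw [h3.deriv]; ring

lemma formula (j : ℕ) : ∀ (a : ℂ → ℂ), Differentiable ℂ a → ∀ (α β w : ℂ),
    iteratedDeriv j (fun s => a s * Complex.exp ((α + β * s) * w)) 0
      = ∑ i ∈ range (j+1),
          (j.choose i : ℂ) * iteratedDeriv (j-i) a 0 * (β*w)^i * Complex.exp (α*w) := by
  induction j with
  | zero => intro a ha α β w; simp
  | succ j IH =>
    intro a ha α β w
    rw [iteratedDeriv_succ', deriv_mul_exp a ha α β w]
    have hd : Differentiable ℂ (fun s => deriv a s + (β*w) * a s) := by
      have h : ContDiff ℂ ((1:ℕ) + 1) a := ha.contDiff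
      exact (((contDiff_succ_iff_deriv.mp h).2.2).differentiable (by simp)).add
        ((ha.const_mul (β*w)))
    rw [IH _ hd α β w]
    -- rewrite inner iterated derivs
    have hrw : ∀ i, iteratedDeriv i (fun s => deriv a s + (β*w) * a s) 0
        = iteratedDeriv (i+1) a 0 + (β*w) * iteratedDeriv i a 0 := by
      intro i
      rw [iteratedDeriv_add' i 0 (by
          have h : ContDiff ℂ ((1:ℕ) + 1) a := ha.contDiff
          exact ((contDiff_succ_iff_deriv.mp h).2.2).differentiable (by simp))
        (ha.const_mul (β*w)), iteratedDeriv_cmul i 0 (β*w) ha, ← iteratedDeriv_succ']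
    simp only [hrw]
    -- now pure finite sum identity
    set x : ℕ → ℂ := fun m => iteratedDeriv m a 0 with hx
    set y : ℂ := β * w
    set E : ℂ := Complex.exp (α * w)
    have expand : ∀ i ∈ range (j+1),
        (j.choose i : ℂ) * (x (j-i+1) + y * x (j-i)) * y^i * E
          = (j.choose i : ℂ) * x (j-i+1) * y^i * E + (j.choose i : ℂ) * x (j-i) * y^(i+1) * E := by
      intro i _; ring
    rw [Finset.sum_congr rfl expand, Finset.sum_add_distrib]
    -- RHS: split off
    rw [Finset.sum_range_succ' (fun i => ((j+1).choose i : ℂ) * x (j+1-i) * y^i * E) (j+1)]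
    have pascal : ∀ i ∈ range (j+1),
        (((j+1).choose (i+1) : ℕ) : ℂ) * x (j+1-(i+1)) * y^(i+1) * E
          = (j.choose i : ℂ) * x (j-i) * y^(i+1) * E
            + (j.choose (i+1) : ℂ) * x (j-i) * y^(i+1) * E := by
      intro i hi
      have h1 : (j+1) - (i+1) = j - i := by omega
      rw [h1, Nat.choose_succ_succ, Nat.cast_add]
      ring
    rw [Finset.sum_congr rfl pascal, Finset.sum_add_distrib]
    -- first piece of LHS
    rw [Finset.sum_range_succ' (fun i => (j.choose i : ℂ) * x (j-i+1) * y^i * E) j]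
    have hshift : ∀ i ∈ range j,
        (j.choose (i+1) : ℂ) * x (j-(i+1)+1) * y^(i+1) * E
          = (j.choose (i+1) : ℂ) * x (j-i) * y^(i+1) * E := by
      intro i hi
      have h1 : j - (i+1) + 1 = j - i := by
        have := mem_range.mp hi; omega
      rw [h1]
    rw [Finset.sum_congr rfl hshift]
    have hextend : ∑ i ∈ range j, (j.choose (i+1) : ℂ) * x (j-i) * y^(i+1) * E
        = ∑ i ∈ range (j+1), (j.choose (i+1) : ℂ) * x (j-i) * y^(i+1) * E := by
      rw [Finset.sum_range_succ]
      simp [Nat.choose_succ_self]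
    rw [hextend]
    simp only [Nat.choose_zero_right, Nat.sub_zero, Nat.cast_one, pow_zero]
    ring

lemma itd_id_mul (m : ℕ) : ∀ (a : ℂ → ℂ), Differentiable ℂ a →
    iteratedDeriv m (fun s => s * a s) 0 = (m : ℂ) * iteratedDeriv (m-1) a 0 := by
  induction m with
  | zero => intro a ha; simp
  | succ m IH =>
    intro a ha
    rw [iteratedDeriv_succ']
    have hda : Differentiable ℂ (deriv a) := by
      have h : ContDiff ℂ ((1:ℕ) + 1) a := ha.contDiff
      exact ((contDiff_succ_iff_deriv.mp h).2.2).differentiable (by simp)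
    have hd : deriv (fun s : ℂ => s * a s) = fun s => a s + s * deriv a s := by
      funext s
      have h5 : HasDerivAt (fun y : ℂ => y * a y) (a s + s * deriv a s) s := by
        have : HasDerivAt (fun y : ℂ => id y * a y) _ s := (hasDerivAt_id s).mul (ha s).hasDerivAt
        simpa [mul_comm] using this
      rw [h5.deriv]
    rw [hd]
    have hg : Differentiable ℂ (fun s : ℂ => s * deriv a s) := by fun_prop
    rw [iteratedDeriv_add' (f := fun s => a s) (g := fun s => s * deriv a s) m 0 ha hg,
      IH _ hda]
    have hm : iteratedDeriv m a 0 + (m:ℂ) * iteratedDeriv (m-1) (deriv a) 0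
        = ((m+1:ℕ) : ℂ) * iteratedDeriv ((m+1)-1) a 0 := by
      rcases m with _ | m'
      · simp
      · rw [Nat.succ_sub_one, Nat.succ_sub_one, ← iteratedDeriv_succ']
        push_cast; ring
    rw [hm]

lemma itd_linear_mul (m : ℕ) (a : ℂ → ℂ) (ha : Differentiable ℂ a) (α β : ℂ) :
    iteratedDeriv m (fun s => (α + β * s) * a s) 0
      = α * iteratedDeriv m a 0 + β * (m : ℂ) * iteratedDeriv (m-1) a 0 := by
  have h : (fun s : ℂ => (α + β * s) * a s)
      = fun s => α * a s + β * (s * a s) := by funext s; ring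
  have hg : Differentiable ℂ (fun s : ℂ => s * a s) := by fun_prop
  rw [h, iteratedDeriv_add' (f := fun s => α * a s) (g := fun s => β * (s * a s)) m 0
      (ha.const_mul α) (hg.const_mul β),
    iteratedDeriv_cmul m 0 α ha, iteratedDeriv_cmul m 0 β hg, itd_id_mul m a ha]
  ring

lemma key (j : ℕ) (a : ℂ → ℂ) (ha : Differentiable ℂ a) (α β w : ℂ) :
    deriv (fun w' => iteratedDeriv j (fun s => a s * Complex.exp ((α + β * s) * w')) 0) w
      = iteratedDeriv j (fun s => (α + β * s) * a s * Complex.exp ((α + β * s) * w)) 0 := by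
  set x : ℕ → ℂ := fun m => iteratedDeriv m a 0 with hxdef
  have hG : (fun w' => iteratedDeriv j (fun s => a s * Complex.exp ((α + β * s) * w')) 0)
      = fun w' => ∑ i ∈ range (j+1),
          ((j.choose i : ℂ) * x (j-i)) * ((β*w')^i * Complex.exp (α*w')) := by
    funext w'
    rw [formula j a ha α β w']
    exact Finset.sum_congr rfl fun i _ => by ring
  rw [hG]
  have hterm : ∀ i, HasDerivAt (fun w' : ℂ =>
        ((j.choose i : ℂ) * x (j-i)) * ((β*w')^i * Complex.exp (α*w')))
      (((j.choose i : ℂ) * x (j-i)) *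
        (((i:ℂ) * (β*w)^(i-1) * β) * Complex.exp (α*w)
          + (β*w)^i * (α * Complex.exp (α*w)))) w := by
    intro i
    have h1 : HasDerivAt (fun w' : ℂ => (β*w')^i) ((i:ℂ) * (β*w)^(i-1) * β) w := by
      have h := (hasDerivAt_pow i (β*w)).comp w ((hasDerivAt_id w).const_mul β)
      rw [mul_one] at h
      exact h
    have h2 : HasDerivAt (fun w' : ℂ => Complex.exp (α*w')) (α * Complex.exp (α*w)) w := by
      have := ((hasDerivAt_id w).const_mul α).cexp
      simpa [mul_comm] using this
    exact (h1.mul h2).const_mul _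
  have hderiv : deriv (fun w' => ∑ i ∈ range (j+1),
        ((j.choose i : ℂ) * x (j-i)) * ((β*w')^i * Complex.exp (α*w'))) w
      = ∑ i ∈ range (j+1), ((j.choose i : ℂ) * x (j-i)) *
          (((i:ℂ) * (β*w)^(i-1) * β) * Complex.exp (α*w)
            + (β*w)^i * (α * Complex.exp (α*w))) :=
    (HasDerivAt.fun_sum (fun i _ => hterm i)).deriv
  rw [hderiv]
  have hAt : Differentiable ℂ (fun s : ℂ => (α + β * s) * a s) := by fun_prop
  have hR : iteratedDeriv j (fun s => (α + β * s) * a s * Complex.exp ((α + β * s) * w)) 0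
      = ∑ i ∈ range (j+1), (j.choose i : ℂ) *
          (α * x (j-i) + β * ((j-i : ℕ):ℂ) * x (j-i-1))
          * (β*w)^i * Complex.exp (α*w) := by
    rw [formula j (fun s => (α + β * s) * a s) hAt α β w]
    exact Finset.sum_congr rfl fun i _ => by
      rw [itd_linear_mul (j-i) a ha α β]
  rw [hR]
  have hsplit : ∀ i ∈ range (j+1),
      ((j.choose i : ℂ) * x (j-i)) *
        (((i:ℂ) * (β*w)^(i-1) * β) * Complex.exp (α*w) + (β*w)^i * (α * Complex.exp (α*w)))
      = ((j.choose i : ℂ) * (i:ℂ) * β * x (j-i) * (β*w)^(i-1) * Complex.exp (α*w))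
        + ((j.choose i : ℂ) * α * x (j-i) * (β*w)^i * Complex.exp (α*w)) := by
    intro i _; ring
  have hsplit2 : ∀ i ∈ range (j+1),
      (j.choose i : ℂ) * (α * x (j-i) + β * ((j-i : ℕ):ℂ) * x (j-i-1))
        * (β*w)^i * Complex.exp (α*w)
      = ((j.choose i : ℂ) * ((j-i : ℕ):ℂ) * β * x (j-i-1) * (β*w)^i * Complex.exp (α*w))
        + ((j.choose i : ℂ) * α * x (j-i) * (β*w)^i * Complex.exp (α*w)) := by
    intro i _; ring
  rw [Finset.sum_congr rfl hsplit, Finset.sum_congr rfl hsplit2,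
    Finset.sum_add_distrib, Finset.sum_add_distrib]
  congr 1
  rw [Finset.sum_range_succ' (fun i => (j.choose i : ℂ) * (i:ℂ) * β * x (j-i)
      * (β*w)^(i-1) * Complex.exp (α*w)) j]
  rw [Finset.sum_range_succ (fun i => (j.choose i : ℂ) * ((j-i : ℕ):ℂ) * β
      * x (j-i-1) * (β*w)^i * Complex.exp (α*w)) j]
  simp only [Nat.cast_zero, Nat.sub_self, mul_zero, zero_mul, add_zero]
  apply Finset.sum_congr rfl
  intro i hi
  have hlt : i < j := mem_range.mp hi
  have h1 : (j - (i+1) : ℕ) = j - i - 1 := by omega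
  have h2 : (i+1) - 1 = i := by omega
  have h3 : (j.choose (i+1) : ℂ) * ((i+1 : ℕ) : ℂ) = (j.choose i : ℂ) * ((j - i : ℕ) : ℂ) := by
    have h4 := Nat.choose_succ_right_eq j i
    calc (j.choose (i+1) : ℂ) * ((i+1 : ℕ) : ℂ)
        = ((j.choose (i+1) * (i+1) : ℕ) : ℂ) := by push_cast; ring
    _ = ((j.choose i * (j - i) : ℕ) : ℂ) := by rw [h4]
    _ = (j.choose i : ℂ) * ((j - i : ℕ) : ℂ) := by push_cast; ring
  rw [h1, h2]
  push_cast at h3 ⊢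
  linear_combination (β * x (j-i-1) * (β*w)^i * Complex.exp (α*w)) * h3

lemma iter_key (n : ℕ) : ∀ (a : ℂ → ℂ), Differentiable ℂ a → ∀ (α β w : ℂ) (j : ℕ),
    iteratedDeriv n (fun w' => iteratedDeriv j (fun s => a s * Complex.exp ((α + β * s) * w')) 0) w
      = iteratedDeriv j (fun s => (α + β * s)^n * a s * Complex.exp ((α + β * s) * w)) 0 := by
  induction n with
  | zero =>
    intro a ha α β w j
    rw [iteratedDeriv_zero]
    congr 1
    funext s
    rw [pow_zero, one_mul]
  | succ n IH =>
    intro a ha α β w j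
    rw [iteratedDeriv_succ']
    have hd : deriv (fun w' => iteratedDeriv j (fun s => a s * Complex.exp ((α + β * s) * w')) 0)
        = fun w' => iteratedDeriv j
            (fun s => ((α + β * s) * a s) * Complex.exp ((α + β * s) * w')) 0 := by
      funext w'
      exact key j a ha α β w'
    rw [hd]
    have hA : Differentiable ℂ (fun s : ℂ => (α + β * s) * a s) := by fun_prop
    rw [IH _ hA α β w j]
    congr 1
    funext s
    ring

lemma vanish (j : ℕ) : ∀ (n : ℕ) (h : ℂ → ℂ), Differentiable ℂ h → j < n →
    iteratedDeriv j (fun s : ℂ => s^n * h s) 0 = 0 := by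
  induction j with
  | zero =>
    intro n h hh hlt
    rw [iteratedDeriv_zero]
    simp [zero_pow (by omega : n ≠ 0)]
  | succ j IH =>
    intro n h hh hlt
    obtain ⟨m, rfl⟩ : ∃ m, n = m + 1 := ⟨n - 1, by omega⟩
    rw [iteratedDeriv_succ']
    have hdh : Differentiable ℂ (deriv h) := by
      have hc : ContDiff ℂ ((1:ℕ) + 1) h := hh.contDiff
      exact ((contDiff_succ_iff_deriv.mp hc).2.2).differentiable (by simp)
    have hd : deriv (fun s : ℂ => s^(m+1) * h s)
        = fun s : ℂ => s^m * (((m:ℂ)+1) * h s + s * deriv h s) := by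
      funext s
      have h1 : HasDerivAt (fun s : ℂ => s^(m+1) * h s) _ s := (hasDerivAt_pow (m+1) s).mul (hh s).hasDerivAt
      rw [h1.deriv]
      push_cast
      ring
    rw [hd]
    exact IH m _ (by fun_prop) (by omega)

lemma one_div_Gamma_rec (z : ℂ) :
    z * (Complex.Gamma (z + 1))⁻¹ = (Complex.Gamma z)⁻¹ := by
  rcases eq_or_ne z 0 with rfl | hz
  · simp [Complex.Gamma_zero]
  · rw [Complex.Gamma_add_one z hz, mul_inv, ← mul_assoc, mul_inv_cancel₀ hz, one_mul]


lemma norm_one_add_nat_add {c : ℕ} {s : ℂ} : (1 + (c:ℕ) : ℝ) - ‖s‖ ≤ ‖1 + ((c:ℕ):ℂ) + s‖ := by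
  have h1 : ‖(1 + ((c:ℕ):ℂ) + s) + (-s)‖ ≤ ‖1 + ((c:ℕ):ℂ) + s‖ + ‖-s‖ := norm_add_le _ _
  have h2 : (1 + ((c:ℕ):ℂ) + s) + (-s) = ((c+1 : ℕ) : ℂ) := by push_cast; ring
  rw [h2] at h1
  have h3 : ‖((c+1 : ℕ) : ℂ)‖ = (c+1 : ℕ) := by
    simpa using Complex.norm_natCast (c+1)
  rw [h3] at h1
  push_cast at h1 ⊢
  simp only [norm_neg] at h1
  linarith

lemma gamma_inv_bound (p : ℕ) (R : ℝ) (hRp : R ≤ p) :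
    ∃ M : ℝ, 0 ≤ M ∧ ∀ (k : ℕ) (s : ℂ), ‖s‖ ≤ R →
      ‖(Complex.Gamma (1 + (k:ℂ) + s))⁻¹‖ ≤ M / (k - p).factorial := by
  obtain ⟨M₀, hM₀⟩ := (isCompact_closedBall (0:ℂ) (1 + p + R)).exists_bound_of_continuousOn
    (Complex.differentiable_one_div_Gamma.continuous.continuousOn)
  set M := max M₀ 0 with hM
  refine ⟨M, le_max_right _ _, ?_⟩
  have base : ∀ (k : ℕ), (k:ℝ) ≤ p → ∀ (s : ℂ), ‖s‖ ≤ R →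
      ‖(Complex.Gamma (1 + (k:ℂ) + s))⁻¹‖ ≤ M := by
    intro k hk s hs
    have hmem : (1 + (k:ℂ) + s) ∈ closedBall (0:ℂ) (1 + p + R) := by
      rw [mem_closedBall_iff_norm, sub_zero]
      calc ‖1 + (k:ℂ) + s‖ ≤ ‖((k+1:ℕ):ℂ)‖ + ‖s‖ := by
            have : (1 + (k:ℂ) + s) = ((k+1:ℕ):ℂ) + s := by push_cast; ring
            rw [this]; exact norm_add_le _ _
      _ ≤ (1 + p + R) := by
            have : ‖((k+1:ℕ):ℂ)‖ = (k+1 : ℕ) := by simpa using Complex.norm_natCast (k+1)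
            rw [this]; push_cast; linarith
    exact le_trans (hM₀ _ hmem) (le_max_left _ _)
  -- main claim by induction on l for k = p + l
  have claim : ∀ (l : ℕ) (s : ℂ), ‖s‖ ≤ R →
      ‖(Complex.Gamma (1 + ((p+l : ℕ):ℂ) + s))⁻¹‖ ≤ M / (l.factorial : ℝ) := by
    intro l
    induction l with
    | zero =>
      intro s hs
      simpa using base p le_rfl s hs
    | succ l IH =>
      intro s hs
      set z : ℂ := 1 + ((p+l : ℕ):ℂ) + s with hz
      have hR0 : (0:ℝ) ≤ R := le_trans (norm_nonneg s) hs
      have hlow : ((l:ℝ) + 1) ≤ ‖z‖ := by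
        rw [hz]
        have h6 := norm_one_add_nat_add (c := p + l) (s := s)
        have hsp : ‖s‖ ≤ (p:ℝ) := le_trans hs hRp
        push_cast at h6 ⊢
        linarith
      have hzne : z ≠ 0 := by
        have hpos : (0:ℝ) < ‖z‖ := lt_of_lt_of_le (by positivity) hlow
        exact norm_pos_iff.mp hpos
      have hrec : Complex.Gamma (1 + ((p+(l+1) : ℕ):ℂ) + s) = z * Complex.Gamma z := by
        have harg : (1 + ((p+(l+1) : ℕ):ℂ) + s) = z + 1 := by rw [hz]; push_cast; ring
        rw [harg, Complex.Gamma_add_one z hzne]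
      rw [hrec, mul_inv, norm_mul, norm_inv]
      have h1 : ‖z‖⁻¹ ≤ ((l:ℝ)+1)⁻¹ := by
        apply inv_anti₀ (by positivity) hlow
      have h2 : ‖(Complex.Gamma z)⁻¹‖ ≤ M / (l.factorial : ℝ) := IH s hs
      calc ‖z‖⁻¹ * ‖(Complex.Gamma z)⁻¹‖ ≤ ((l:ℝ)+1)⁻¹ * (M / l.factorial) := by
            apply mul_le_mul h1 h2 (norm_nonneg _) (by positivity)
      _ = M / ((l+1).factorial : ℝ) := by
            rw [Nat.factorial_succ]
            push_cast
            field_simp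
  intro k s hs
  rcases le_or_gt (k:ℝ) (p:ℝ) with hk | hk
  · have hkp : k - p = 0 := by
      have : k ≤ p := by exact_mod_cast hk
      omega
    rw [hkp]
    simpa using base k hk s hs
  · have hkp : p ≤ k := by
      have : (p:ℝ) < k := hk
      exact_mod_cast this.le
    obtain ⟨l, rfl⟩ : ∃ l, k = p + l := ⟨k - p, by omega⟩
    have : (p + l) - p = l := by omega
    rw [this]
    exact claim l s hs

lemma summable_aux (a : ℝ) (p : ℕ) (C : ℝ) :
    Summable (fun k : ℕ => C * a^k / ((k - p).factorial : ℝ)) := by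
  apply (summable_nat_add_iff p).mp
  have h : ∀ k : ℕ, C * a^(k+p) / (((k+p) - p).factorial : ℝ)
      = (C * a^p) * (a^k / (k.factorial : ℝ)) := by
    intro k
    rw [Nat.add_sub_cancel, pow_add]
    ring
  exact Summable.congr (((Real.summable_pow_div_factorial a).mul_left (C * a^p))) (fun k => (h k).symm)

lemma iter_deriv_bound {f : ℂ → ℂ} (hf : Differentiable ℂ f) {M : ℝ} (m : ℕ) :
    ∀ (R : ℝ), (∀ z : ℂ, ‖z‖ ≤ R + m → ‖f z‖ ≤ M) →
    ∀ z : ℂ, ‖z‖ ≤ R → ‖iteratedDeriv m f z‖ ≤ M := by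
  induction m with
  | zero => intro R hb z hz; simpa using hb z (by simpa using hz)
  | succ m IH =>
    intro R hb z hz
    rw [iteratedDeriv_succ]
    refine deriv_bound (entire_iteratedDeriv hf m) (fun x hx => ?_) z hz
    refine IH (R+1) (fun y hy => hb y ?_) x hx
    push_cast at hy ⊢
    linarith

lemma norm_cexp_le (z : ℂ) : ‖Complex.exp z‖ ≤ Real.exp ‖z‖ := by
  rw [Complex.norm_exp]
  exact Real.exp_le_exp.mpr (Complex.re_le_norm z)

lemma pow_div_factorial_le (M : ℝ) (hM : 0 ≤ M) (q n : ℕ) (hn : 1 ≤ n) :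
    (M / q.factorial)^n ≤ M^n / q.factorial := by
  rw [div_pow]
  refine div_le_div_of_nonneg_left (by positivity) ?_ ?_
  · exact_mod_cast q.factorial_pos
  · exact_mod_cast le_self_pow₀ (by exact_mod_cast q.factorial_pos) (by omega)

lemma norm_arg_le (n k : ℕ) (R : ℝ) (w' s : ℂ) (hs : ‖s‖ ≤ R) :
    ‖((k:ℂ) * (n:ℂ) + (n:ℂ) * s) * w'‖ ≤ ((k:ℝ) * n + n * R) * ‖w'‖ := by
  rw [norm_mul]
  apply mul_le_mul_of_nonneg_right _ (norm_nonneg w')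
  calc ‖(k:ℂ) * (n:ℂ) + (n:ℂ) * s‖ ≤ ‖(k:ℂ) * (n:ℂ)‖ + ‖(n:ℂ) * s‖ := norm_add_le _ _
  _ ≤ (k:ℝ) * n + n * R := by
      rw [norm_mul, norm_mul]
      have h1 : ‖(k:ℂ)‖ = (k:ℝ) := by simpa using Complex.norm_natCast k
      have h2 : ‖(n:ℂ)‖ = (n:ℝ) := by simpa using Complex.norm_natCast n
      rw [h1, h2]
      have := mul_le_mul_of_nonneg_left hs (by positivity : (0:ℝ) ≤ (n:ℝ))
      linarith

lemma exp_split (n k : ℕ) (R W : ℝ) :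
    Real.exp (((k:ℝ) * n + n * R) * W) = Real.exp (n*R*W) * (Real.exp (n*W))^k := by
  rw [← Real.exp_nat_mul, ← Real.exp_add]
  ring_nf

lemma bddfam_s (n : ℕ) (hn : 1 ≤ n) (w' : ℂ) :
    BddFam (fun k s => ((Complex.Gamma (1+(k:ℂ)+s))⁻¹)^n
      * Complex.exp (((k:ℂ) * (n:ℂ) + (n:ℂ) * s) * w')) := by
  intro R
  rcases lt_or_ge R 0 with hR | hR
  · exact ⟨fun _ => 0, summable_zero, fun k z hz =>
      absurd (le_trans (norm_nonneg z) hz) (by linarith)⟩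
  set p := Nat.ceil R with hp
  obtain ⟨M, hM0, hM⟩ := gamma_inv_bound p R (Nat.le_ceil R)
  set W := ‖w'‖ with hW
  refine ⟨fun k => (Real.exp ((n:ℝ)*R*W) * M^n) * (Real.exp ((n:ℝ)*W))^k / ((k-p).factorial : ℝ),
    summable_aux _ _ _, ?_⟩
  intro k s hs
  rw [norm_mul]
  have h1 : ‖((Complex.Gamma (1+(k:ℂ)+s))⁻¹)^n‖ ≤ M^n / ((k-p).factorial : ℝ) := by
    rw [norm_pow]
    calc ‖(Complex.Gamma (1+(k:ℂ)+s))⁻¹‖^n ≤ (M / ((k-p).factorial : ℝ))^n := by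
          apply pow_le_pow_left₀ (norm_nonneg _) (hM k s hs)
    _ ≤ M^n / ((k-p).factorial : ℝ) := pow_div_factorial_le M hM0 _ n hn
  have h2 : ‖Complex.exp (((k:ℂ) * (n:ℂ) + (n:ℂ) * s) * w')‖
      ≤ Real.exp ((n:ℝ)*R*W) * (Real.exp ((n:ℝ)*W))^k := by
    calc ‖Complex.exp (((k:ℂ) * (n:ℂ) + (n:ℂ) * s) * w')‖
        ≤ Real.exp ‖((k:ℂ) * (n:ℂ) + (n:ℂ) * s) * w'‖ := norm_cexp_le _
    _ ≤ Real.exp (((k:ℝ) * n + n * R) * W) :=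
        Real.exp_le_exp.mpr (norm_arg_le n k R w' s hs)
    _ = Real.exp ((n:ℝ)*R*W) * (Real.exp ((n:ℝ)*W))^k := exp_split n k R W
  calc ‖((Complex.Gamma (1+(k:ℂ)+s))⁻¹)^n‖ * ‖Complex.exp (((k:ℂ) * (n:ℂ) + (n:ℂ) * s) * w')‖
      ≤ (M^n / ((k-p).factorial : ℝ)) * (Real.exp ((n:ℝ)*R*W) * (Real.exp ((n:ℝ)*W))^k) :=
        mul_le_mul h1 h2 (norm_nonneg _) (by positivity)
  _ = (Real.exp ((n:ℝ)*R*W) * M^n) * (Real.exp ((n:ℝ)*W))^k / ((k-p).factorial : ℝ) := by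
        ring

lemma gamma_inv_pow_entire (n k : ℕ) :
    Differentiable ℂ (fun s : ℂ => ((Complex.Gamma (1+(k:ℂ)+s))⁻¹)^n) := by
  apply Differentiable.pow
  exact Complex.differentiable_one_div_Gamma.comp (by fun_prop)

lemma d_bound (n j : ℕ) (hn : 1 ≤ n) : ∃ M : ℝ, 0 ≤ M ∧ ∀ (k m : ℕ), m ≤ j →
    ‖iteratedDeriv m (fun s : ℂ => ((Complex.Gamma (1+(k:ℂ)+s))⁻¹)^n) 0‖
      ≤ M / ((k-j).factorial : ℝ) := by
  obtain ⟨M, hM0, hM⟩ := gamma_inv_bound j (j:ℝ) le_rfl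
  refine ⟨M^n, by positivity, ?_⟩
  intro k m hm
  refine iter_deriv_bound (gamma_inv_pow_entire n k) m 0 (fun z hz => ?_) 0 (by simp)
  have hzj : ‖z‖ ≤ (j:ℝ) := le_trans hz (by
    rw [zero_add]
    exact_mod_cast hm)
  rw [norm_pow]
  calc ‖(Complex.Gamma (1+(k:ℂ)+z))⁻¹‖^n ≤ (M / ((k-j).factorial : ℝ))^n :=
        pow_le_pow_left₀ (norm_nonneg _) (hM k z hzj) n
  _ ≤ M^n / ((k-j).factorial : ℝ) := pow_div_factorial_le M hM0 _ n hn

lemma bddfam_w (n j : ℕ) (hn : 1 ≤ n) :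
    BddFam (fun k w' => ∑ i ∈ range (j+1),
      (j.choose i : ℂ) * iteratedDeriv (j-i) (fun s : ℂ => ((Complex.Gamma (1+(k:ℂ)+s))⁻¹)^n) 0
        * ((n:ℂ)*w')^i * Complex.exp ((k:ℂ)*(n:ℂ)*w')) := by
  intro R
  rcases lt_or_ge R 0 with hR | hR
  · exact ⟨fun _ => 0, summable_zero, fun k z hz =>
      absurd (le_trans (norm_nonneg z) hz) (by linarith)⟩
  obtain ⟨Md, hMd0, hMd⟩ := d_bound n j hn
  set K : ℝ := ∑ i ∈ range (j+1), ((j.choose i : ℝ) * ((n:ℝ)*R)^i) with hK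
  refine ⟨fun k => K * (Real.exp ((n:ℝ)*R))^k / ((k-j).factorial : ℝ) * Md, ?_, ?_⟩
  · have := summable_aux (Real.exp ((n:ℝ)*R)) j K
    exact Summable.congr (this.mul_right Md) (fun k => by ring)
  intro k w' hw'
  have hterm : ∀ i ∈ range (j+1),
      ‖(j.choose i : ℂ) * iteratedDeriv (j-i) (fun s : ℂ => ((Complex.Gamma (1+(k:ℂ)+s))⁻¹)^n) 0
        * ((n:ℂ)*w')^i * Complex.exp ((k:ℂ)*(n:ℂ)*w')‖
      ≤ ((j.choose i : ℝ) * ((n:ℝ)*R)^i) * ((Real.exp ((n:ℝ)*R))^k / ((k-j).factorial : ℝ) * Md) := by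
    intro i hi
    rw [norm_mul, norm_mul, norm_mul, norm_pow]
    have hC : ‖((j.choose i : ℕ) : ℂ)‖ = ((j.choose i : ℕ) : ℝ) := by
      simpa using Complex.norm_natCast (j.choose i)
    have hd' := hMd k (j-i) (by omega)
    have hnw : ‖(n:ℂ)*w'‖ ≤ (n:ℝ)*R := by
      rw [norm_mul]
      have h2 : ‖(n:ℂ)‖ = (n:ℝ) := by simpa using Complex.norm_natCast n
      rw [h2]
      exact mul_le_mul_of_nonneg_left hw' (by positivity)
    have hexp : ‖Complex.exp ((k:ℂ)*(n:ℂ)*w')‖ ≤ (Real.exp ((n:ℝ)*R))^k := by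
      calc ‖Complex.exp ((k:ℂ)*(n:ℂ)*w')‖ ≤ Real.exp ‖(k:ℂ)*(n:ℂ)*w'‖ := norm_cexp_le _
      _ ≤ Real.exp ((k:ℝ)*((n:ℝ)*R)) := by
          apply Real.exp_le_exp.mpr
          rw [norm_mul, norm_mul]
          have h1 : ‖(k:ℂ)‖ = (k:ℝ) := by simpa using Complex.norm_natCast k
          have h2 : ‖(n:ℂ)‖ = (n:ℝ) := by simpa using Complex.norm_natCast n
          rw [h1, h2, mul_assoc]
          apply mul_le_mul_of_nonneg_left _ (by positivity : (0:ℝ) ≤ (k:ℝ))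
          exact mul_le_mul_of_nonneg_left hw' (by positivity)
      _ = (Real.exp ((n:ℝ)*R))^k := by rw [← Real.exp_nat_mul]
    have hmain : ‖((j.choose i : ℕ) : ℂ)‖
          * ‖iteratedDeriv (j-i) (fun s : ℂ => ((Complex.Gamma (1+(k:ℂ)+s))⁻¹)^n) 0‖
          * ‖(n:ℂ)*w'‖^i * ‖Complex.exp ((k:ℂ)*(n:ℂ)*w')‖
        ≤ ((j.choose i : ℕ) : ℝ) * (Md / ((k-j).factorial : ℝ)) * ((n:ℝ)*R)^i
            * (Real.exp ((n:ℝ)*R))^k := by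
      rw [hC]
      gcongr
      all_goals first
        | exact hd'
        | exact hnw
        | exact hexp
        | exact le_trans (norm_nonneg _) hnw
        | positivity
    calc ‖((j.choose i : ℕ) : ℂ)‖
          * ‖iteratedDeriv (j-i) (fun s : ℂ => ((Complex.Gamma (1+(k:ℂ)+s))⁻¹)^n) 0‖
          * ‖(n:ℂ)*w'‖^i * ‖Complex.exp ((k:ℂ)*(n:ℂ)*w')‖
        ≤ ((j.choose i : ℕ) : ℝ) * (Md / ((k-j).factorial : ℝ)) * ((n:ℝ)*R)^i
            * (Real.exp ((n:ℝ)*R))^k := hmain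
    _ = ((j.choose i : ℝ) * ((n:ℝ)*R)^i) * ((Real.exp ((n:ℝ)*R))^k / ((k-j).factorial : ℝ) * Md) := by
        ring
  calc ‖∑ i ∈ range (j+1),
      (j.choose i : ℂ) * iteratedDeriv (j-i) (fun s : ℂ => ((Complex.Gamma (1+(k:ℂ)+s))⁻¹)^n) 0
        * ((n:ℂ)*w')^i * Complex.exp ((k:ℂ)*(n:ℂ)*w')‖
      ≤ ∑ i ∈ range (j+1), ‖(j.choose i : ℂ)
          * iteratedDeriv (j-i) (fun s : ℂ => ((Complex.Gamma (1+(k:ℂ)+s))⁻¹)^n) 0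
          * ((n:ℂ)*w')^i * Complex.exp ((k:ℂ)*(n:ℂ)*w')‖ := norm_sum_le _ _
  _ ≤ ∑ i ∈ range (j+1), ((j.choose i : ℝ) * ((n:ℝ)*R)^i)
        * ((Real.exp ((n:ℝ)*R))^k / ((k-j).factorial : ℝ) * Md) := Finset.sum_le_sum hterm
  _ = K * (Real.exp ((n:ℝ)*R))^k / ((k-j).factorial : ℝ) * Md := by
      rw [← Finset.sum_mul, ← hK]
      ring


/-- For `n ≥ 2` and `0 ≤ j ≤ n−1`, the function `Φ_j(z) = ∂_s^j|_{s=0} E(s,z)`, where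
`E(s,z) = ∑_k z^{kn+ns}/Γ(1+k+s)^n`, solves the scalar quantum differential equation
`θ_z^n Φ_j = (nz)^n Φ_j` of `ℙ^{n−1}`. Written in the coordinate `w = log z` on the
universal cover of `ℂ*`, where `θ_z = z d/dz` becomes `d/dw` and `(nz)^n = n^n exp(n·w)`. -/
theorem derivatives_genML_solve_qde (n : ℕ) (hn : 2 ≤ n) (j : ℕ) (hj : j ≤ n - 1) (w : ℂ) :
    iteratedDeriv n
        (fun w' : ℂ => iteratedDeriv j
          (fun s : ℂ => ∑' k : ℕ,
            Complex.exp (((k : ℂ) * n + (n : ℂ) * s) * w') / (Complex.Gamma (1 + (k : ℂ) + s)) ^ n) 0) w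
      = (n : ℂ) ^ n * Complex.exp ((n : ℂ) * w) *
          iteratedDeriv j
            (fun s : ℂ => ∑' k : ℕ,
              Complex.exp (((k : ℂ) * n + (n : ℂ) * s) * w) / (Complex.Gamma (1 + (k : ℂ) + s)) ^ n) 0 := by
  have hn1 : 1 ≤ n := by omega
  have hjn : j < n := by omega
  -- differentiability of the s-families
  have hdF : ∀ (w' : ℂ) (k : ℕ), Differentiable ℂ (fun s : ℂ =>
      ((Complex.Gamma (1+(k:ℂ)+s))⁻¹)^n * Complex.exp (((k:ℂ)*(n:ℂ) + (n:ℂ)*s) * w')) :=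
    fun w' k => (gamma_inv_pow_entire n k).mul (Complex.differentiable_exp.comp (by fun_prop))
  -- rewrite the inner function of the statement
  have hinner : ∀ w' : ℂ,
      (fun s : ℂ => ∑' k : ℕ,
        Complex.exp (((k : ℂ) * n + (n : ℂ) * s) * w') / (Complex.Gamma (1 + (k : ℂ) + s)) ^ n)
      = fun s : ℂ => ∑' k : ℕ,
        ((Complex.Gamma (1+(k:ℂ)+s))⁻¹)^n * Complex.exp (((k:ℂ)*(n:ℂ) + (n:ℂ)*s) * w') := by
    intro w'
    funext s
    refine tsum_congr (fun k => ?_)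
    rw [div_eq_mul_inv, ← inv_pow, mul_comm]
  -- Step A : swap in s, and explicit polynomial form (P k)
  have hPsum : ∀ w' : ℂ, HasSum
      (fun k : ℕ => ∑ i ∈ range (j+1),
        (j.choose i : ℂ) * iteratedDeriv (j-i) (fun s : ℂ => ((Complex.Gamma (1+(k:ℂ)+s))⁻¹)^n) 0
          * ((n:ℂ)*w')^i * Complex.exp ((k:ℂ)*(n:ℂ)*w'))
      (iteratedDeriv j
        (fun s : ℂ => ∑' k : ℕ,
          Complex.exp (((k : ℂ) * n + (n : ℂ) * s) * w') / (Complex.Gamma (1 + (k : ℂ) + s)) ^ n) 0) := by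
    intro w'
    rw [hinner w']
    have h1 : HasSum
        (fun k : ℕ => iteratedDeriv j (fun s : ℂ =>
          ((Complex.Gamma (1+(k:ℂ)+s))⁻¹)^n * Complex.exp (((k:ℂ)*(n:ℂ) + (n:ℂ)*s) * w')) 0)
        (iteratedDeriv j (fun s : ℂ => ∑' k : ℕ,
          ((Complex.Gamma (1+(k:ℂ)+s))⁻¹)^n * Complex.exp (((k:ℂ)*(n:ℂ) + (n:ℂ)*s) * w')) 0) :=
      hasSum_iteratedDeriv (hdF w') (bddfam_s n hn1 w') j 0
    have h2 : (fun k : ℕ => iteratedDeriv j (fun s : ℂ =>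
          ((Complex.Gamma (1+(k:ℂ)+s))⁻¹)^n * Complex.exp (((k:ℂ)*(n:ℂ) + (n:ℂ)*s) * w')) 0)
        = fun k : ℕ => ∑ i ∈ range (j+1),
          (j.choose i : ℂ) * iteratedDeriv (j-i) (fun s : ℂ => ((Complex.Gamma (1+(k:ℂ)+s))⁻¹)^n) 0
            * ((n:ℂ)*w')^i * Complex.exp ((k:ℂ)*(n:ℂ)*w') := by
      funext k
      exact formula j _ (gamma_inv_pow_entire n k) ((k:ℂ)*(n:ℂ)) (n:ℂ) w'
    rwa [h2] at h1
  -- Φ equals the sum of the P k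
  have hPhiP : (fun w' : ℂ => iteratedDeriv j
        (fun s : ℂ => ∑' k : ℕ,
          Complex.exp (((k : ℂ) * n + (n : ℂ) * s) * w') / (Complex.Gamma (1 + (k : ℂ) + s)) ^ n) 0)
      = fun w' : ℂ => ∑' k : ℕ, ∑ i ∈ range (j+1),
          (j.choose i : ℂ) * iteratedDeriv (j-i) (fun s : ℂ => ((Complex.Gamma (1+(k:ℂ)+s))⁻¹)^n) 0
            * ((n:ℂ)*w')^i * Complex.exp ((k:ℂ)*(n:ℂ)*w') := by
    funext w'
    exact ((hPsum w').tsum_eq).symm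
  -- Step B : swap in w
  have hdP : ∀ k : ℕ, Differentiable ℂ (fun w' : ℂ => ∑ i ∈ range (j+1),
      (j.choose i : ℂ) * iteratedDeriv (j-i) (fun s : ℂ => ((Complex.Gamma (1+(k:ℂ)+s))⁻¹)^n) 0
        * ((n:ℂ)*w')^i * Complex.exp ((k:ℂ)*(n:ℂ)*w')) := by
    intro k
    apply Differentiable.fun_sum
    intro i _
    exact (((differentiable_const _).mul (by fun_prop)).mul
      (Complex.differentiable_exp.comp (by fun_prop)))
  have hswap2 : HasSum
      (fun k : ℕ => iteratedDeriv n (fun w' : ℂ => ∑ i ∈ range (j+1),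
        (j.choose i : ℂ) * iteratedDeriv (j-i) (fun s : ℂ => ((Complex.Gamma (1+(k:ℂ)+s))⁻¹)^n) 0
          * ((n:ℂ)*w')^i * Complex.exp ((k:ℂ)*(n:ℂ)*w')) w)
      (iteratedDeriv n (fun w' : ℂ => ∑' k : ℕ, ∑ i ∈ range (j+1),
        (j.choose i : ℂ) * iteratedDeriv (j-i) (fun s : ℂ => ((Complex.Gamma (1+(k:ℂ)+s))⁻¹)^n) 0
          * ((n:ℂ)*w')^i * Complex.exp ((k:ℂ)*(n:ℂ)*w')) w) :=
    hasSum_iteratedDeriv hdP (bddfam_w n j hn1) n w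
  -- Step C : per-term commutation
  have hC : ∀ k : ℕ, iteratedDeriv n (fun w' : ℂ => ∑ i ∈ range (j+1),
        (j.choose i : ℂ) * iteratedDeriv (j-i) (fun s : ℂ => ((Complex.Gamma (1+(k:ℂ)+s))⁻¹)^n) 0
          * ((n:ℂ)*w')^i * Complex.exp ((k:ℂ)*(n:ℂ)*w')) w
      = iteratedDeriv j (fun s : ℂ => ((k:ℂ)*(n:ℂ) + (n:ℂ)*s)^n
          * ((Complex.Gamma (1+(k:ℂ)+s))⁻¹)^n
          * Complex.exp (((k:ℂ)*(n:ℂ) + (n:ℂ)*s) * w)) 0 := by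
    intro k
    have h1 : (fun w' : ℂ => ∑ i ∈ range (j+1),
        (j.choose i : ℂ) * iteratedDeriv (j-i) (fun s : ℂ => ((Complex.Gamma (1+(k:ℂ)+s))⁻¹)^n) 0
          * ((n:ℂ)*w')^i * Complex.exp ((k:ℂ)*(n:ℂ)*w'))
        = fun w' : ℂ => iteratedDeriv j (fun s : ℂ =>
            ((Complex.Gamma (1+(k:ℂ)+s))⁻¹)^n * Complex.exp (((k:ℂ)*(n:ℂ) + (n:ℂ)*s) * w')) 0 := by
      funext w'
      exact (formula j _ (gamma_inv_pow_entire n k) ((k:ℂ)*(n:ℂ)) (n:ℂ) w').symm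
    rw [h1]
    have h2 := iter_key n _ (gamma_inv_pow_entire n k) ((k:ℂ)*(n:ℂ)) (n:ℂ) w j
    convert h2 using 2
  -- Step E : the k = 0 term vanishes
  have hS0 : iteratedDeriv j (fun s : ℂ => (((0:ℕ):ℂ)*(n:ℂ) + (n:ℂ)*s)^n
      * ((Complex.Gamma (1+((0:ℕ):ℂ)+s))⁻¹)^n
      * Complex.exp ((((0:ℕ):ℂ)*(n:ℂ) + (n:ℂ)*s) * w)) 0 = 0 := by
    have h1 : (fun s : ℂ => (((0:ℕ):ℂ)*(n:ℂ) + (n:ℂ)*s)^n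
        * ((Complex.Gamma (1+((0:ℕ):ℂ)+s))⁻¹)^n
        * Complex.exp ((((0:ℕ):ℂ)*(n:ℂ) + (n:ℂ)*s) * w))
        = fun s : ℂ => s^n * ((n:ℂ)^n * (((Complex.Gamma (1+((0:ℕ):ℂ)+s))⁻¹)^n
            * Complex.exp ((((0:ℕ):ℂ)*(n:ℂ) + (n:ℂ)*s) * w))) := by
      funext s
      push_cast
      ring
    rw [h1]
    refine vanish j n _ ?_ hjn
    exact (((gamma_inv_pow_entire n 0).mul
      (Complex.differentiable_exp.comp (by fun_prop))).const_mul _)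
  -- Step D : shift identity for k+1
  have hSsucc : ∀ k : ℕ, iteratedDeriv j (fun s : ℂ => (((k+1:ℕ):ℂ)*(n:ℂ) + (n:ℂ)*s)^n
        * ((Complex.Gamma (1+((k+1:ℕ):ℂ)+s))⁻¹)^n
        * Complex.exp ((((k+1:ℕ):ℂ)*(n:ℂ) + (n:ℂ)*s) * w)) 0
      = (n:ℂ)^n * Complex.exp ((n:ℂ)*w) * ∑ i ∈ range (j+1),
          (j.choose i : ℂ) * iteratedDeriv (j-i) (fun s : ℂ => ((Complex.Gamma (1+(k:ℂ)+s))⁻¹)^n) 0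
            * ((n:ℂ)*w)^i * Complex.exp ((k:ℂ)*(n:ℂ)*w) := by
    intro k
    have hfun : (fun s : ℂ => (((k+1:ℕ):ℂ)*(n:ℂ) + (n:ℂ)*s)^n
        * ((Complex.Gamma (1+((k+1:ℕ):ℂ)+s))⁻¹)^n
        * Complex.exp ((((k+1:ℕ):ℂ)*(n:ℂ) + (n:ℂ)*s) * w))
        = fun s : ℂ => ((n:ℂ)^n * Complex.exp ((n:ℂ)*w))
            * (((Complex.Gamma (1+(k:ℂ)+s))⁻¹)^n
              * Complex.exp (((k:ℂ)*(n:ℂ) + (n:ℂ)*s) * w)) := by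
      funext s
      have hz : ((k+1:ℕ):ℂ)*(n:ℂ) + (n:ℂ)*s = (n:ℂ) * (1+(k:ℂ)+s) := by push_cast; ring
      have harg : (1:ℂ)+((k+1:ℕ):ℂ)+s = (1+(k:ℂ)+s) + 1 := by push_cast; ring
      rw [hz, harg]
      have hrec : ((1+(k:ℂ)+s) * (Complex.Gamma ((1+(k:ℂ)+s)+1))⁻¹)^n
          = ((Complex.Gamma (1+(k:ℂ)+s))⁻¹)^n := by rw [one_div_Gamma_rec]
      have hexp : Complex.exp ((n:ℂ) * (1+(k:ℂ)+s) * w)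
          = Complex.exp ((n:ℂ)*w) * Complex.exp (((k:ℂ)*(n:ℂ) + (n:ℂ)*s)*w) := by
        rw [← Complex.exp_add]
        congr 1
        ring
      calc ((n:ℂ) * (1+(k:ℂ)+s))^n * ((Complex.Gamma ((1+(k:ℂ)+s)+1))⁻¹)^n
            * Complex.exp ((n:ℂ) * (1+(k:ℂ)+s) * w)
          = (n:ℂ)^n * ((1+(k:ℂ)+s) * (Complex.Gamma ((1+(k:ℂ)+s)+1))⁻¹)^n
            * Complex.exp ((n:ℂ) * (1+(k:ℂ)+s) * w) := by
            rw [mul_pow, mul_pow]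
            ring
      _ = ((n:ℂ)^n * Complex.exp ((n:ℂ)*w))
            * (((Complex.Gamma (1+(k:ℂ)+s))⁻¹)^n
              * Complex.exp (((k:ℂ)*(n:ℂ) + (n:ℂ)*s) * w)) := by
            rw [hrec, hexp]
            ring
    rw [hfun]
    have hg : Differentiable ℂ (fun s : ℂ => ((Complex.Gamma (1+(k:ℂ)+s))⁻¹)^n
        * Complex.exp (((k:ℂ)*(n:ℂ) + (n:ℂ)*s) * w)) := hdF w k
    rw [iteratedDeriv_cmul j 0 _ hg]
    rw [formula j _ (gamma_inv_pow_entire n k) ((k:ℂ)*(n:ℂ)) (n:ℂ) w]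
  -- Step F : combine everything
  rw [hPhiP]
  have hSsum : HasSum
      (fun k : ℕ => iteratedDeriv j (fun s : ℂ => ((k:ℂ)*(n:ℂ) + (n:ℂ)*s)^n
          * ((Complex.Gamma (1+(k:ℂ)+s))⁻¹)^n
          * Complex.exp (((k:ℂ)*(n:ℂ) + (n:ℂ)*s) * w)) 0)
      (iteratedDeriv n (fun w' : ℂ => ∑' k : ℕ, ∑ i ∈ range (j+1),
        (j.choose i : ℂ) * iteratedDeriv (j-i) (fun s : ℂ => ((Complex.Gamma (1+(k:ℂ)+s))⁻¹)^n) 0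
          * ((n:ℂ)*w')^i * Complex.exp ((k:ℂ)*(n:ℂ)*w')) w) := by
    have h3 : (fun k : ℕ => iteratedDeriv n (fun w' : ℂ => ∑ i ∈ range (j+1),
        (j.choose i : ℂ) * iteratedDeriv (j-i) (fun s : ℂ => ((Complex.Gamma (1+(k:ℂ)+s))⁻¹)^n) 0
          * ((n:ℂ)*w')^i * Complex.exp ((k:ℂ)*(n:ℂ)*w')) w)
        = fun k : ℕ => iteratedDeriv j (fun s : ℂ => ((k:ℂ)*(n:ℂ) + (n:ℂ)*s)^n
          * ((Complex.Gamma (1+(k:ℂ)+s))⁻¹)^n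
          * Complex.exp (((k:ℂ)*(n:ℂ) + (n:ℂ)*s) * w)) 0 := funext hC
    rwa [h3] at hswap2
  have hplus : HasSum
      (fun k : ℕ => iteratedDeriv j (fun s : ℂ => ((k:ℂ)*(n:ℂ) + (n:ℂ)*s)^n
          * ((Complex.Gamma (1+(k:ℂ)+s))⁻¹)^n
          * Complex.exp (((k:ℂ)*(n:ℂ) + (n:ℂ)*s) * w)) 0)
      ((iteratedDeriv n (fun w' : ℂ => ∑' k : ℕ, ∑ i ∈ range (j+1),
        (j.choose i : ℂ) * iteratedDeriv (j-i) (fun s : ℂ => ((Complex.Gamma (1+(k:ℂ)+s))⁻¹)^n) 0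
          * ((n:ℂ)*w')^i * Complex.exp ((k:ℂ)*(n:ℂ)*w')) w)
        + ∑ i ∈ range 1, iteratedDeriv j (fun s : ℂ => ((i:ℂ)*(n:ℂ) + (n:ℂ)*s)^n
          * ((Complex.Gamma (1+(i:ℂ)+s))⁻¹)^n
          * Complex.exp (((i:ℂ)*(n:ℂ) + (n:ℂ)*s) * w)) 0) := by
    have h0 : (∑ i ∈ range 1, iteratedDeriv j (fun s : ℂ => ((i:ℂ)*(n:ℂ) + (n:ℂ)*s)^n
        * ((Complex.Gamma (1+(i:ℂ)+s))⁻¹)^n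
        * Complex.exp (((i:ℂ)*(n:ℂ) + (n:ℂ)*s) * w)) 0) = 0 := by
      rw [Finset.sum_range_one]
      exact hS0
    rw [h0, add_zero]
    exact hSsum
  have hshift : HasSum
      (fun k : ℕ => iteratedDeriv j (fun s : ℂ => (((k+1:ℕ):ℂ)*(n:ℂ) + (n:ℂ)*s)^n
          * ((Complex.Gamma (1+((k+1:ℕ):ℂ)+s))⁻¹)^n
          * Complex.exp ((((k+1:ℕ):ℂ)*(n:ℂ) + (n:ℂ)*s) * w)) 0)
      (iteratedDeriv n (fun w' : ℂ => ∑' k : ℕ, ∑ i ∈ range (j+1),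
        (j.choose i : ℂ) * iteratedDeriv (j-i) (fun s : ℂ => ((Complex.Gamma (1+(k:ℂ)+s))⁻¹)^n) 0
          * ((n:ℂ)*w')^i * Complex.exp ((k:ℂ)*(n:ℂ)*w')) w) := (hasSum_nat_add_iff 1).mpr hplus
  have hmul : HasSum
      (fun k : ℕ => ((n:ℂ)^n * Complex.exp ((n:ℂ)*w)) * ∑ i ∈ range (j+1),
          (j.choose i : ℂ) * iteratedDeriv (j-i) (fun s : ℂ => ((Complex.Gamma (1+(k:ℂ)+s))⁻¹)^n) 0
            * ((n:ℂ)*w)^i * Complex.exp ((k:ℂ)*(n:ℂ)*w))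
      (((n:ℂ)^n * Complex.exp ((n:ℂ)*w)) * iteratedDeriv j
        (fun s : ℂ => ∑' k : ℕ,
          Complex.exp (((k : ℂ) * n + (n : ℂ) * s) * w) / (Complex.Gamma (1 + (k : ℂ) + s)) ^ n) 0) :=
    (hPsum w).mul_left _
  have hshift2 : HasSum
      (fun k : ℕ => ((n:ℂ)^n * Complex.exp ((n:ℂ)*w)) * ∑ i ∈ range (j+1),
          (j.choose i : ℂ) * iteratedDeriv (j-i) (fun s : ℂ => ((Complex.Gamma (1+(k:ℂ)+s))⁻¹)^n) 0
            * ((n:ℂ)*w)^i * Complex.exp ((k:ℂ)*(n:ℂ)*w))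
      (iteratedDeriv n (fun w' : ℂ => ∑' k : ℕ, ∑ i ∈ range (j+1),
        (j.choose i : ℂ) * iteratedDeriv (j-i) (fun s : ℂ => ((Complex.Gamma (1+(k:ℂ)+s))⁻¹)^n) 0
          * ((n:ℂ)*w')^i * Complex.exp ((k:ℂ)*(n:ℂ)*w')) w) := by
    have hfin : ∀ k : ℕ, iteratedDeriv j (fun s : ℂ => (((k+1:ℕ):ℂ)*(n:ℂ) + (n:ℂ)*s)^n
          * ((Complex.Gamma (1+((k+1:ℕ):ℂ)+s))⁻¹)^n
          * Complex.exp ((((k+1:ℕ):ℂ)*(n:ℂ) + (n:ℂ)*s) * w)) 0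
        = ((n:ℂ)^n * Complex.exp ((n:ℂ)*w)) * ∑ i ∈ range (j+1),
          (j.choose i : ℂ) * iteratedDeriv (j-i) (fun s : ℂ => ((Complex.Gamma (1+(k:ℂ)+s))⁻¹)^n) 0
            * ((n:ℂ)*w)^i * Complex.exp ((k:ℂ)*(n:ℂ)*w) := by
      intro k
      rw [hSsucc k]
    exact funext hfin ▸ hshift
  exact HasSum.unique hshift2 hmul
end
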